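/- arXiv:1605.05469 — 2 statements merged into one kernel-verified Lean document; each statement's English description precedes it below -/
import Mathlib

section
/- For q ∈ ℂ with 0 < |q| ≤ c₀ (where c₀ satisfies 2·∑_{ν=1}^∞ c₀^{ν²/2} = 1), the function x ↦ θ(q,x) = ∑_{j=0}^∞ q^{j(j+1)/2} x^j has no multiple zeros; i.e., there is no x ∈ ℂ with θ(q,x) = 0 and θ_x(q,x) = 0. -/
open Complex Metric Set

/-- The partial theta function θ(q,x) = ∑_{j=0}^∞ q^{j(j+1)/2} x^j. -/
noncomputable def theta (q x : ℂ) : ℂ := ∑' j : ℕ, q ^ (j * (j + 1) / 2) * x ^ j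

namespace PTFAux

noncomputable def wind (f : ℂ → ℂ) (r : ℝ) : ℂ := ∮ z in C(0, r), deriv f z / f z

lemma deriv_entire {f : ℂ → ℂ} (hf : Differentiable ℂ f) : Differentiable ℂ (deriv f) :=
  analyticOnNhd_univ_iff_differentiable.mp ((analyticOnNhd_univ_iff_differentiable.mpr hf).deriv)

lemma wind_eq_integral (f : ℂ → ℂ) (r : ℝ) :
    wind f r = ∫ s in (0:ℝ)..(2 * Real.pi),
      deriv f (circleMap 0 r s) * (circleMap 0 r s * I) / f (circleMap 0 r s) := by
  rw [wind, circleIntegral]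
  apply intervalIntegral.integral_congr
  intro s _
  simp only [deriv_circleMap, smul_eq_mul]
  rw [mul_comm, div_mul_eq_mul_div]

lemma wind_int {f : ℂ → ℂ} (hf : Differentiable ℂ f) {r : ℝ} (hr : 0 < r)
    (hnz : ∀ z ∈ sphere (0:ℂ) r, f z ≠ 0) :
    ∃ n : ℤ, wind f r = n * (2 * Real.pi * I) := by
  set γ := circleMap 0 r with hγ
  have hγnz : ∀ s : ℝ, f (γ s) ≠ 0 := fun s => hnz _ (circleMap_mem_sphere 0 hr.le s)
  have hγc : Continuous γ := continuous_circleMap 0 r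
  have hdc : Continuous (deriv f) := (deriv_entire hf).continuous
  set Q : ℝ → ℂ := fun s => deriv f (γ s) * (γ s * I) / f (γ s) with hQ
  have hQc : Continuous Q := by
    apply Continuous.div
    · exact (hdc.comp hγc).mul (hγc.mul continuous_const)
    · exact hf.continuous.comp hγc
    · exact hγnz
  set Ψ : ℝ → ℂ := fun t => ∫ s in (0:ℝ)..t, Q s with hΨ
  have hΨd : ∀ t : ℝ, HasDerivAt Ψ (Q t) t := fun t =>
    intervalIntegral.integral_hasDerivAt_right (hQc.intervalIntegrable 0 t)
      (hQc.stronglyMeasurableAtFilter _ _) hQc.continuousAt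
  have hφd : ∀ s : ℝ, HasDerivAt (fun u => f (γ u)) (deriv f (γ s) * (γ s * I)) s := by
    intro s
    have h1 : HasDerivAt f (deriv f (γ s)) (γ s) := (hf (γ s)).hasDerivAt
    have h2 := h1.scomp s (hasDerivAt_circleMap 0 r s)
    exact h2.congr_deriv (by rw [smul_eq_mul, hγ]; ring)
  set F : ℝ → ℂ := fun t => Complex.exp (-Ψ t) * f (γ t) with hF
  have hFd : ∀ t : ℝ, HasDerivAt F 0 t := by
    intro t
    have h1 : HasDerivAt (fun u => Complex.exp (-Ψ u)) (Complex.exp (-Ψ t) * (-Q t)) t :=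
      ((hΨd t).neg).cexp
    have h2 := (h1.mul (hφd t))
    have heq : Complex.exp (-Ψ t) * (-Q t) * f (γ t)
        + Complex.exp (-Ψ t) * (deriv f (γ t) * (γ t * I)) = 0 := by
      have hne := hγnz t
      simp only [hQ]
      field_simp
      ring
    rw [heq] at h2
    exact h2
  have hFconst : F (2 * Real.pi) = F 0 :=
    is_const_of_deriv_eq_zero (fun t => (hFd t).differentiableAt)
      (fun t => (hFd t).deriv) _ _
  have hγper : γ (2 * Real.pi) = γ 0 := by
    have := (periodic_circleMap 0 r) 0
    simpa using this
  have hΨ0 : Ψ 0 = 0 := intervalIntegral.integral_same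
  rw [hF] at hFconst
  simp only [hΨ0, neg_zero, Complex.exp_zero, one_mul, hγper] at hFconst
  have hexp : Complex.exp (-Ψ (2 * Real.pi)) = 1 :=
    mul_right_cancel₀ (hγnz 0) (by rw [hFconst, one_mul])
  obtain ⟨n, hn⟩ := Complex.exp_eq_one_iff.mp hexp
  refine ⟨-n, ?_⟩
  have hΨval : Ψ (2 * Real.pi) = (-n : ℤ) * (2 * Real.pi * I) := by
    have h4 : Ψ (2 * Real.pi) = -(↑n * (2 * ↑Real.pi * I)) := by
      rw [← hn]; ring
    rw [h4]; push_cast; ring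
  rw [wind_eq_integral]
  exact hΨval


lemma eq_endpoints_of_integer_valued {J : ℝ → ℂ} {a b : ℝ} (hab : a ≤ b)
    (hc : ContinuousOn J (Set.Icc a b))
    (hint : ∀ t ∈ Set.Icc a b, ∃ n : ℤ, J t = n * (2 * Real.pi * Complex.I)) :
    J a = J b := by
  have ha : a ∈ Set.Icc a b := Set.left_mem_Icc.mpr hab
  have hb : b ∈ Set.Icc a b := Set.right_mem_Icc.mpr hab
  obtain ⟨na, hna⟩ := hint a ha
  obtain ⟨nb, hnb⟩ := hint b hb
  have hne : (2 * (Real.pi:ℂ) * Complex.I) ≠ 0 := by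
    simp [Real.pi_ne_zero, Complex.I_ne_zero, Complex.ofReal_ne_zero]
  suffices hnn : na = nb by rw [hna, hnb, hnn]
  set u : ℝ → ℝ := fun t => (J t / (2 * Real.pi * Complex.I)).re with hu
  have huc : ContinuousOn u (Set.Icc a b) :=
    Complex.continuous_re.comp_continuousOn (hc.div_const _)
  have huint : ∀ t ∈ Set.Icc a b, ∃ n : ℤ, u t = n := by
    intro t ht
    obtain ⟨n, hn⟩ := hint t ht
    refine ⟨n, ?_⟩
    simp [hu, hn, mul_div_assoc, div_self hne]
  have hua : u a = na := by simp [hu, hna, mul_div_assoc, div_self hne]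
  have hub : u b = nb := by simp [hu, hnb, mul_div_assoc, div_self hne]
  by_contra hneq
  have key : ∀ (y : ℝ), y ∈ Set.Icc (u a) (u b) ∪ Set.Icc (u b) (u a) →
      ∃ t ∈ Set.Icc a b, u t = y := by
    intro y hy
    rcases hy with hy | hy
    · obtain ⟨t, ht, ht2⟩ := intermediate_value_Icc hab huc hy
      exact ⟨t, ht, ht2⟩
    · obtain ⟨t, ht, ht2⟩ := intermediate_value_Icc' hab huc hy
      exact ⟨t, ht, ht2⟩
  rcases lt_or_gt_of_ne hneq with hlt | hlt
  · have hy : ((na:ℝ) + 1/2) ∈ Set.Icc (u a) (u b) := by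
      rw [hua, hub]
      constructor
      · linarith
      · have : (na : ℝ) + 1 ≤ nb := by exact_mod_cast hlt
        linarith
    obtain ⟨t, ht, ht2⟩ := key _ (Or.inl hy)
    obtain ⟨n, hn⟩ := huint t ht
    rw [hn] at ht2
    have : (2*n : ℝ) = 2*na + 1 := by rw [← Int.cast_ofNat]; push_cast at ht2 ⊢; linarith
    have : (2*n : ℤ) = 2*na + 1 := by exact_mod_cast this
    omega
  · have hy : ((nb:ℝ) + 1/2) ∈ Set.Icc (u b) (u a) := by
      rw [hua, hub]
      constructor
      · linarith
      · have : (nb : ℝ) + 1 ≤ na := by exact_mod_cast hlt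
        linarith
    obtain ⟨t, ht, ht2⟩ := key _ (Or.inr hy)
    obtain ⟨n, hn⟩ := huint t ht
    rw [hn] at ht2
    have : (2*n : ℝ) = 2*nb + 1 := by rw [← Int.cast_ofNat]; push_cast at ht2 ⊢; linarith
    have : (2*n : ℤ) = 2*nb + 1 := by exact_mod_cast this
    omega

lemma ne_zero_of_sphere {r : ℝ} (hr : 0 < r) {z : ℂ} (hz : z ∈ sphere (0:ℂ) r) : z ≠ 0 := by
  intro h
  rw [h, mem_sphere_iff_norm] at hz
  simp at hz
  exact hr.ne' hz.symm

lemma circleIntegral_add {f g : ℂ → ℂ} {c : ℂ} {R : ℝ} (hf : CircleIntegrable f c R)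
    (hg : CircleIntegrable g c R) :
    (∮ z in C(c, R), (f z + g z)) = (∮ z in C(c, R), f z) + ∮ z in C(c, R), g z := by
  simp only [circleIntegral, smul_add, intervalIntegral.integral_add hf.out hg.out]

lemma wind_monomial {A : ℂ} (hA : A ≠ 0) (m : ℕ) {r : ℝ} (hr : 0 < r) :
    wind (fun z => A * z ^ m) r = m * (2 * Real.pi * Complex.I) := by
  have hd : deriv (fun z : ℂ => A * z ^ m) = fun z => A * (m * z ^ (m-1)) :=
    funext fun z => ((hasDerivAt_pow m z).const_mul A).deriv
  rcases Nat.eq_zero_or_pos m with hm | hm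
  · subst hm
    have hfun : (fun z : ℂ => deriv (fun z : ℂ => A * z ^ 0) z / (A * z ^ 0)) = fun _ => (0:ℂ) := by
      funext z; rw [hd]; simp
    rw [wind]
    rw [show (fun z : ℂ => deriv (fun z : ℂ => A * z ^ 0) z / (A * z ^ 0)) = fun _ => (0:ℂ) from hfun]
    simp [circleIntegral]
  · have heq : Set.EqOn (fun z => deriv (fun z : ℂ => A * z ^ m) z / (A * z ^ m))
        (fun z => (m : ℂ) * (z - 0)⁻¹) (sphere (0:ℂ) r) := by
      intro z hz
      have hz0 : z ≠ 0 := ne_zero_of_sphere hr hz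
      simp only [hd, sub_zero]
      have hzm : z ^ m = z ^ (m - 1) * z := by
        conv_lhs => rw [← Nat.succ_pred_eq_of_pos hm]
        rw [pow_succ]
        rfl
      rw [hzm]
      field_simp
    rw [wind, circleIntegral.integral_congr hr.le heq,
      circleIntegral.integral_const_mul]
    rw [circleIntegral.integral_sub_inv_of_mem_ball (by simpa using hr)]

lemma integral_sub_inv_of_outside {ζ : ℂ} {r : ℝ} (hr : 0 < r) (hζ : r < ‖ζ‖) :
    (∮ z in C(0, r), (z - ζ)⁻¹) = 0 := by
  have hd : DifferentiableOn ℂ (fun z => z * (z - ζ)⁻¹) (closedBall (0:ℂ) r) := by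
    intro z hz
    apply DifferentiableAt.differentiableWithinAt
    apply differentiableAt_fun_id.mul
    apply DifferentiableAt.inv ((differentiableAt_fun_id.sub_const ζ))
    intro h
    have hzζ : z = ζ := by linear_combination h
    rw [mem_closedBall, dist_zero_right, hzζ] at hz
    exact absurd (lt_of_lt_of_le hζ hz) (lt_irrefl _)
  have h0 : (0:ℂ) ∈ ball (0:ℂ) r := mem_ball_self hr
  have := hd.circleIntegral_sub_inv_smul h0
  simp only [smul_eq_mul, zero_mul, mul_zero, sub_zero] at this
  have heq : Set.EqOn (fun z : ℂ => (z - ζ)⁻¹) (fun z : ℂ => z⁻¹ * (z * (z - ζ)⁻¹))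
      (sphere (0:ℂ) r) := by
    intro z hz
    have hz0 : z ≠ 0 := ne_zero_of_sphere hr hz
    simp only []
    rw [← mul_assoc, inv_mul_cancel₀ hz0, one_mul]
  rw [circleIntegral.integral_congr hr.le heq]
  exact this

lemma wind_factor {g : ℂ → ℂ} (hg : Differentiable ℂ g) (ζ : ℂ) (n : ℕ) {r : ℝ} (hr : 0 < r)
    (hgnz : ∀ z ∈ sphere (0:ℂ) r, g z ≠ 0) (hζs : ∀ z ∈ sphere (0:ℂ) r, z ≠ ζ) {c : ℂ}
    (hc : (∮ z in C(0, r), (z - ζ)⁻¹) = c) :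
    wind (fun z => (z - ζ) ^ n * g z) r = n * c + wind g r := by
  rcases Nat.eq_zero_or_pos n with hn | hn
  · subst hn
    simp only [pow_zero, one_mul, Nat.cast_zero, zero_mul, zero_add]
  · have hd : deriv (fun z => (z - ζ) ^ n * g z)
        = fun z => (n * (z - ζ) ^ (n-1)) * g z + (z - ζ) ^ n * deriv g z := by
      funext z
      have h1 : HasDerivAt (fun z : ℂ => (z - ζ) ^ n) (n * (z - ζ) ^ (n-1) * 1) z :=
        ((hasDerivAt_id z).sub_const ζ).pow n
      have h2 := (h1.mul (hg z).hasDerivAt).deriv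
      rw [show (fun z => (z - ζ) ^ n * g z) = (fun z => (z - ζ) ^ n) * g from rfl, h2]; ring
    have heq : Set.EqOn (fun z => deriv (fun z => (z - ζ) ^ n * g z) z / ((z - ζ) ^ n * g z))
        (fun z => (n : ℂ) * (z - ζ)⁻¹ + deriv g z / g z) (sphere (0:ℂ) r) := by
      intro z hz
      have hzζ : z - ζ ≠ 0 := sub_ne_zero.mpr (hζs z hz)
      have hgz : g z ≠ 0 := hgnz z hz
      simp only [hd]
      have hzm : (z - ζ) ^ n = (z - ζ) ^ (n - 1) * (z - ζ) := by
        conv_lhs => rw [← Nat.succ_pred_eq_of_pos hn]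
        rw [pow_succ]
        rfl
      rw [hzm]
      field_simp
    have hint1 : CircleIntegrable (fun z => (n : ℂ) * (z - ζ)⁻¹) 0 r := by
      apply ContinuousOn.circleIntegrable hr.le
      apply continuousOn_const.mul
      apply ContinuousOn.inv₀ ((continuousOn_id.sub continuousOn_const))
      exact fun z hz => sub_ne_zero.mpr (hζs z hz)
    have hint2 : CircleIntegrable (fun z => deriv g z / g z) 0 r := by
      apply ContinuousOn.circleIntegrable hr.le
      exact ((deriv_entire hg).continuous.continuousOn.div
        hg.continuous.continuousOn hgnz)
    rw [wind, circleIntegral.integral_congr hr.le heq,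
      circleIntegral_add hint1 hint2, circleIntegral.integral_const_mul, hc]
    rfl


lemma continuousOn_param_integral {G : ℝ → ℝ → ℂ} {a b : ℝ}
    (hG : ContinuousOn (fun p : ℝ × ℝ => G p.1 p.2) (Set.Icc a b ×ˢ Set.Icc 0 (2*Real.pi))) :
    ContinuousOn (fun t => ∫ s in (0:ℝ)..(2*Real.pi), G t s) (Set.Icc a b) := by
  have hK : IsCompact (Set.Icc a b ×ˢ Set.Icc 0 (2*Real.pi)) :=
    isCompact_Icc.prod isCompact_Icc
  have hUC := hK.uniformContinuousOn_of_continuous hG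
  rw [Metric.uniformContinuousOn_iff] at hUC
  have hInt : ∀ t ∈ Set.Icc a b, IntervalIntegrable (fun s => G t s) MeasureTheory.volume
      0 (2*Real.pi) := by
    intro t ht
    apply ContinuousOn.intervalIntegrable
    have : (fun s => G t s) = (fun p : ℝ × ℝ => G p.1 p.2) ∘ (fun s => (t, s)) := rfl
    rw [this]
    apply hG.comp (Continuous.continuousOn (by continuity))
    intro s hs
    rw [Set.uIcc_of_le Real.two_pi_pos.le] at hs
    exact Set.mk_mem_prod ht hs
  intro t₀ ht₀
  rw [Metric.continuousWithinAt_iff]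
  intro ε hε
  obtain ⟨δ, hδ, hd⟩ := hUC (ε / (4*Real.pi + 1)) (by positivity)
  refine ⟨δ, hδ, fun {t} ht hdist => ?_⟩
  have hsub : dist (∫ s in (0:ℝ)..(2*Real.pi), G t s) (∫ s in (0:ℝ)..(2*Real.pi), G t₀ s)
      ≤ (ε / (4*Real.pi + 1)) * |2*Real.pi - 0| := by
    rw [dist_eq_norm, ← intervalIntegral.integral_sub (hInt t ht) (hInt t₀ ht₀)]
    apply intervalIntegral.norm_integral_le_of_norm_le_const
    intro s hs
    have hsmem : s ∈ Set.Icc 0 (2*Real.pi) := by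
      rw [Set.uIoc_of_le Real.two_pi_pos.le] at hs
      exact Set.mem_Icc.mpr ⟨hs.1.le, hs.2⟩
    have h1 : (t, s) ∈ Set.Icc a b ×ˢ Set.Icc 0 (2*Real.pi) := Set.mk_mem_prod ht hsmem
    have h2 : (t₀, s) ∈ Set.Icc a b ×ˢ Set.Icc 0 (2*Real.pi) := Set.mk_mem_prod ht₀ hsmem
    have h3 : dist ((t,s) : ℝ × ℝ) ((t₀,s) : ℝ × ℝ) < δ := by
      rw [Prod.dist_eq]
      simp only [dist_self]
      rw [max_eq_left dist_nonneg]
      exact hdist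
    have := hd _ h1 _ h2 h3
    rw [dist_eq_norm] at this
    exact this.le
  calc dist (∫ s in (0:ℝ)..(2*Real.pi), G t s) (∫ s in (0:ℝ)..(2*Real.pi), G t₀ s)
      ≤ (ε / (4*Real.pi + 1)) * |2*Real.pi - 0| := hsub
    _ < ε := by
        rw [sub_zero, abs_of_pos Real.two_pi_pos]
        rw [div_mul_eq_mul_div, div_lt_iff₀ (by positivity)]
        have hπ : 0 < Real.pi := Real.pi_pos
        nlinarith

lemma wind_rouche {f₀ f₁ : ℂ → ℂ} (h0 : Differentiable ℂ f₀) (h1 : Differentiable ℂ f₁)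
    {r : ℝ} (hr : 0 < r)
    (hlt : ∀ z ∈ sphere (0:ℂ) r, ‖(f₁ z - f₀ z)‖ < ‖(f₀ z)‖) :
    wind f₁ r = wind f₀ r := by
  set h : ℝ → ℂ → ℂ := fun t z => f₀ z + (t:ℂ) * (f₁ z - f₀ z) with hh
  have hht : ∀ t : ℝ, Differentiable ℂ (h t) := fun t => h0.add ((h1.sub h0).const_mul _)
  have hnz : ∀ t ∈ Set.Icc (0:ℝ) 1, ∀ z ∈ sphere (0:ℂ) r, h t z ≠ 0 := by
    rintro t ⟨ht0, ht1⟩ z hz hzero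
    have h2 : f₀ z = -((t:ℂ) * (f₁ z - f₀ z)) := by
      rw [← neg_eq_iff_eq_neg]; linear_combination - hzero
    have h3 : ‖(f₀ z)‖ ≤ ‖(f₁ z - f₀ z)‖ := by
      have habs : ‖(f₀ z)‖ = ‖(t:ℂ)‖ * ‖(f₁ z - f₀ z)‖ := by
        conv_lhs => rw [h2]
        rw [norm_neg, norm_mul]
      have ht : ‖(t:ℂ)‖ ≤ 1 := by
        rw [Complex.norm_real, Real.norm_eq_abs, _root_.abs_of_nonneg ht0]; exact ht1
      rw [habs]
      nlinarith [norm_nonneg (f₁ z - f₀ z), norm_nonneg (t:ℂ)]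
    exact absurd (lt_of_le_of_lt h3 (hlt z hz)) (lt_irrefl _)
  have hder : ∀ t : ℝ, deriv (h t) = fun z => deriv f₀ z + (t:ℂ) * (deriv f₁ z - deriv f₀ z) := by
    intro t; funext z
    exact (((h0 z).hasDerivAt).add ((((h1 z).hasDerivAt).sub ((h0 z).hasDerivAt)).const_mul _)).deriv
  set G : ℝ → ℝ → ℂ := fun t s =>
    (deriv f₀ (circleMap 0 r s) + (t:ℂ) * (deriv f₁ (circleMap 0 r s) - deriv f₀ (circleMap 0 r s)))
      * (circleMap 0 r s * I)
      / (f₀ (circleMap 0 r s) + (t:ℂ) * (f₁ (circleMap 0 r s) - f₀ (circleMap 0 r s))) with hG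
  have hwind : ∀ t : ℝ, wind (h t) r = ∫ s in (0:ℝ)..(2*Real.pi), G t s := by
    intro t
    rw [wind_eq_integral]
    congr 1
    funext s
    rw [hder t]
  have hγc : Continuous (circleMap 0 r) := continuous_circleMap 0 r
  have hd0 : Continuous (deriv f₀) := (deriv_entire h0).continuous
  have hd1 : Continuous (deriv f₁) := (deriv_entire h1).continuous
  have hcγ2 : Continuous (fun p : ℝ × ℝ => circleMap 0 r p.2) := hγc.comp continuous_snd
  have hct : Continuous (fun p : ℝ × ℝ => ((p.1 : ℂ))) :=
    Complex.continuous_ofReal.comp continuous_fst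
  have hGc : ContinuousOn (fun p : ℝ × ℝ => G p.1 p.2)
      (Set.Icc (0:ℝ) 1 ×ˢ Set.Icc 0 (2*Real.pi)) := by
    have hc1 : Continuous (fun p : ℝ × ℝ =>
        (deriv f₀ (circleMap 0 r p.2) + ((p.1:ℝ):ℂ) * (deriv f₁ (circleMap 0 r p.2)
          - deriv f₀ (circleMap 0 r p.2))) * (circleMap 0 r p.2 * I)) :=
      ((hd0.comp hcγ2).add (hct.mul ((hd1.comp hcγ2).sub (hd0.comp hcγ2)))).mul
        (hcγ2.mul continuous_const)
    have hc2 : Continuous (fun p : ℝ × ℝ => f₀ (circleMap 0 r p.2)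
        + ((p.1:ℝ):ℂ) * (f₁ (circleMap 0 r p.2) - f₀ (circleMap 0 r p.2))) :=
      (h0.continuous.comp hcγ2).add
        (hct.mul ((h1.continuous.comp hcγ2).sub (h0.continuous.comp hcγ2)))
    apply ContinuousOn.div hc1.continuousOn hc2.continuousOn
    rintro ⟨t, s⟩ ⟨ht, _⟩
    exact hnz t ht (circleMap 0 r s) (circleMap_mem_sphere 0 hr.le s)
  have hJc := continuousOn_param_integral hGc
  have hJint : ∀ t ∈ Set.Icc (0:ℝ) 1, ∃ n : ℤ,
      (∫ s in (0:ℝ)..(2*Real.pi), G t s) = n * (2 * Real.pi * Complex.I) := by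
    intro t ht
    obtain ⟨n, hn⟩ := wind_int (hht t) hr (hnz t ht)
    exact ⟨n, by rw [← hwind t]; exact hn⟩
  have hends := eq_endpoints_of_integer_valued zero_le_one hJc hJint
  have e0 : wind (h 0) r = ∫ s in (0:ℝ)..(2*Real.pi), G 0 s := hwind 0
  have e1 : wind (h 1) r = ∫ s in (0:ℝ)..(2*Real.pi), G 1 s := hwind 1
  have hh0 : h 0 = f₀ := by funext z; simp [hh]
  have hh1 : h 1 = f₁ := by funext z; simp [hh]
  rw [hh0] at e0
  rw [hh1] at e1
  rw [e0, e1, ← hends]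


lemma eqzero_of_eventually {f : ℂ → ℂ} (hf : Differentiable ℂ f) {ζ : ℂ}
    (hev : ∀ᶠ z in nhds ζ, f z = 0) : ∀ z, f z = 0 := by
  have heq : Set.EqOn f 0 Set.univ := by
    apply (analyticOnNhd_univ_iff_differentiable.mpr
      hf).eqOn_zero_of_preconnected_of_eventuallyEq_zero isPreconnected_univ (Set.mem_univ ζ)
    filter_upwards [hev] with z hz
    simpa using hz
  exact fun z => heq (Set.mem_univ z)

lemma zeros_finite {f : ℂ → ℂ} (hf : Differentiable ℂ f) {w : ℂ} (hw : f w ≠ 0)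
    {K : Set ℂ} (hK : IsCompact K) : {z | z ∈ K ∧ f z = 0}.Finite := by
  by_contra hinf
  set S := {z | z ∈ K ∧ f z = 0} with hS
  have hinf2 : S.Infinite := hinf
  have u : ℕ ↪ S := hinf2.natEmbedding
  have hmem : ∀ n : ℕ, (u n : ℂ) ∈ K := fun n => (u n).2.1
  obtain ⟨x, hxK, φ, hφ, hconv⟩ := hK.tendsto_subseq hmem
  have hfreq : ∃ᶠ z in nhdsWithin x {x}ᶜ, f z = 0 := by
    rw [Filter.frequently_iff]
    intro U hU
    rw [mem_nhdsWithin] at hU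
    obtain ⟨V, hVopen, hxV, hVU⟩ := hU
    have hev : ∀ᶠ n in Filter.atTop, ((u ∘ φ) n : ℂ) ∈ V := hconv (hVopen.mem_nhds hxV)
    obtain ⟨N, hN⟩ := Filter.eventually_atTop.mp hev
    have hinj : ((u (φ N)) : ℂ) ≠ ((u (φ (N+1))) : ℂ) := by
      intro h
      have h2 := u.injective (Subtype.ext h)
      have h3 := hφ.injective h2
      omega
    rcases ne_or_eq ((u (φ N)) : ℂ) x with hne | heq
    · exact ⟨u (φ N), hVU ⟨hN N le_rfl, hne⟩, (u (φ N)).2.2⟩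
    · refine ⟨u (φ (N+1)), hVU ⟨hN (N+1) (by omega), ?_⟩, (u (φ (N+1))).2.2⟩
      rw [← heq]
      exact fun h => hinj h.symm
  have hev0 := ((hf.analyticAt x).frequently_zero_iff_eventually_zero).mp hfreq
  exact hw (eqzero_of_eventually hf hev0 w)

lemma exists_factor {f : ℂ → ℂ} (hf : Differentiable ℂ f) {ζ w : ℂ} (hfζ : f ζ = 0)
    (hfw : f w ≠ 0) :
    ∃ (n : ℕ) (g : ℂ → ℂ), 1 ≤ n ∧ Differentiable ℂ g ∧ g ζ ≠ 0 ∧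
      ∀ z, f z = (z - ζ) ^ n * g z := by
  classical
  have hA : AnalyticAt ℂ f ζ := hf.analyticAt ζ
  have hnev : ¬ ∀ᶠ z in nhds ζ, f z = 0 := fun hev => hfw (eqzero_of_eventually hf hev w)
  obtain ⟨n, g0, hg0an, hg0ζ, hev⟩ := hA.exists_eventuallyEq_pow_smul_nonzero_iff.mpr hnev
  have hn : 1 ≤ n := by
    by_contra hn0
    push_neg at hn0
    interval_cases n
    have h1 := hev.self_of_nhds
    simp only [pow_zero, one_smul] at h1
    exact hg0ζ (by rw [← h1]; exact hfζ)
  set g : ℂ → ℂ := fun z => if z = ζ then g0 ζ else f z / (z - ζ) ^ n with hg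
  have hfac : ∀ z, f z = (z - ζ) ^ n * g z := by
    intro z
    by_cases hz : z = ζ
    · subst hz
      rw [hfζ]
      simp [hg, sub_self, zero_pow (by omega : n ≠ 0)]
    · simp only [hg, if_neg hz]
      rw [mul_comm, div_mul_cancel₀ _ (pow_ne_zero n (sub_ne_zero.mpr hz))]
  have hgev : g =ᶠ[nhds ζ] g0 := by
    filter_upwards [hev] with z hz
    by_cases h : z = ζ
    · subst h; simp [hg]
    · simp only [hg, if_neg h]
      rw [hz, smul_eq_mul, mul_comm, mul_div_assoc,
        div_self (pow_ne_zero n (sub_ne_zero.mpr h)), mul_one]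
  have hgdiff : Differentiable ℂ g := by
    intro z
    by_cases hz : z = ζ
    · subst hz
      exact (hg0an.differentiableAt).congr_of_eventuallyEq hgev
    · have hne : ∀ᶠ y in nhds z, y ∈ ({ζ}ᶜ : Set ℂ) :=
        isOpen_compl_singleton.eventually_mem hz
      have hd : DifferentiableAt ℂ (fun y => f y / (y - ζ) ^ n) z :=
        (hf z).div ((differentiableAt_fun_id.sub_const ζ).pow n)
          (pow_ne_zero n (sub_ne_zero.mpr hz))
      apply hd.congr_of_eventuallyEq
      filter_upwards [hne] with y hy
      have hy2 : y ≠ ζ := Set.mem_compl_singleton_iff.mp hy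
      simp [hg, if_neg hy2]
  refine ⟨n, g, hn, hgdiff, by simpa [hg] using hg0ζ, hfac⟩

lemma continuous_circleMap_joint (r : ℝ) :
    Continuous (fun p : ℝ × ℝ => circleMap 0 p.1 p.2) := by
  simp only [circleMap, zero_add]
  exact (Complex.continuous_ofReal.comp continuous_fst).mul
    (Complex.continuous_exp.comp ((Complex.continuous_ofReal.comp continuous_snd).mul
      continuous_const))

lemma wind_eq_of_no_zeros {g : ℂ → ℂ} (hg : Differentiable ℂ g) {ρ R : ℝ} (hρ : 0 < ρ)
    (hρR : ρ ≤ R) (hnz : ∀ z : ℂ, ‖z‖ ∈ Set.Icc ρ R → g z ≠ 0) :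
    wind g R = wind g ρ := by
  set G : ℝ → ℝ → ℂ := fun r s =>
    deriv g (circleMap 0 r s) * (circleMap 0 r s * I) / g (circleMap 0 r s) with hG
  have habs : ∀ (r : ℝ), ρ ≤ r → r ≤ R → ∀ s : ℝ, ‖(circleMap 0 r s)‖ ∈ Set.Icc ρ R := by
    intro r h1 h2 s
    rw [norm_circleMap_zero, _root_.abs_of_nonneg (le_trans hρ.le h1)]
    exact ⟨h1, h2⟩
  have hsphnz : ∀ (r : ℝ), ρ ≤ r → r ≤ R → ∀ z ∈ sphere (0:ℂ) r, g z ≠ 0 := by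
    intro r h1 h2 z hz
    apply hnz
    rw [mem_sphere_iff_norm, sub_zero] at hz
    rw [hz]
    exact ⟨h1, h2⟩
  have hGc : ContinuousOn (fun p : ℝ × ℝ => G p.1 p.2)
      (Set.Icc ρ R ×ˢ Set.Icc 0 (2*Real.pi)) := by
    have hj : Continuous (fun p : ℝ × ℝ => circleMap 0 p.1 p.2) := continuous_circleMap_joint 0
    have hnum : Continuous (fun p : ℝ × ℝ =>
        deriv g (circleMap 0 p.1 p.2) * (circleMap 0 p.1 p.2 * I)) :=
      ((deriv_entire hg).continuous.comp hj).mul (hj.mul continuous_const)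
    have hden : Continuous (fun p : ℝ × ℝ => g (circleMap 0 p.1 p.2)) := hg.continuous.comp hj
    apply ContinuousOn.div hnum.continuousOn hden.continuousOn
    rintro ⟨r, s⟩ ⟨hr, _⟩
    exact hnz _ (habs r hr.1 hr.2 s)
  have hJc := continuousOn_param_integral hGc
  have hwind : ∀ r ∈ Set.Icc ρ R, wind g r = ∫ s in (0:ℝ)..(2*Real.pi), G r s := by
    intro r _
    rw [wind_eq_integral]
  have hJint : ∀ r ∈ Set.Icc ρ R, ∃ n : ℤ,
      (∫ s in (0:ℝ)..(2*Real.pi), G r s) = n * (2*Real.pi*Complex.I) := by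
    intro r hr
    obtain ⟨n, hn⟩ := wind_int hg (lt_of_lt_of_le hρ hr.1) (hsphnz r hr.1 hr.2)
    exact ⟨n, by rw [← hwind r hr]; exact hn⟩
  have hends := eq_endpoints_of_integer_valued hρR hJc hJint
  rw [hwind ρ (Set.left_mem_Icc.mpr hρR), hwind R (Set.right_mem_Icc.mpr hρR)]
  exact hends.symm

lemma wind_mono_aux : ∀ (N : ℕ) (g : ℂ → ℂ), Differentiable ℂ g →
    ∀ {ρ R : ℝ}, 0 < ρ → ρ ≤ R →
    (∀ z ∈ sphere (0:ℂ) ρ, g z ≠ 0) → (∀ z ∈ sphere (0:ℂ) R, g z ≠ 0) →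
    ∀ (hfin : {z : ℂ | ‖z‖ ∈ Set.Icc ρ R ∧ g z = 0}.Finite),
    hfin.toFinset.card ≤ N →
    ∃ m : ℕ, wind g R = wind g ρ + m * (2 * Real.pi * Complex.I) := by
  intro N
  induction N with
  | zero =>
    intro g hg ρ R hρ hρR hnzρ hnzR hfin hcard
    refine ⟨0, ?_⟩
    have hempty : hfin.toFinset = ∅ := Finset.card_eq_zero.mp (Nat.le_zero.mp hcard)
    have hnz : ∀ z : ℂ, ‖z‖ ∈ Set.Icc ρ R → g z ≠ 0 := by
      intro z hz hz0
      have : z ∈ hfin.toFinset := hfin.mem_toFinset.mpr ⟨hz, hz0⟩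
      rw [hempty] at this
      exact absurd this (Finset.notMem_empty z)
    rw [wind_eq_of_no_zeros hg hρ hρR hnz]
    simp
  | succ N ih =>
    intro g hg ρ R hρ hρR hnzρ hnzR hfin hcard
    by_cases hS : hfin.toFinset = ∅
    · refine ⟨0, ?_⟩
      have hnz : ∀ z : ℂ, ‖z‖ ∈ Set.Icc ρ R → g z ≠ 0 := by
        intro z hz hz0
        have : z ∈ hfin.toFinset := hfin.mem_toFinset.mpr ⟨hz, hz0⟩
        rw [hS] at this
        exact absurd this (Finset.notMem_empty z)
      rw [wind_eq_of_no_zeros hg hρ hρR hnz]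
      simp
    · obtain ⟨ζ, hζF⟩ := Finset.nonempty_of_ne_empty hS
      obtain ⟨hζann, hζ0⟩ := hfin.mem_toFinset.mp hζF
      have hR : 0 < R := lt_of_lt_of_le hρ hρR
      have hζρ : ρ < ‖ζ‖ := by
        rcases lt_or_eq_of_le hζann.1 with h | h
        · exact h
        · exfalso
          apply hnzρ ζ _ hζ0
          rw [mem_sphere_iff_norm, sub_zero, ← h]
      have hζR : ‖ζ‖ < R := by
        rcases lt_or_eq_of_le hζann.2 with h | h
        · exact h
        · exfalso
          apply hnzR ζ _ hζ0
          rw [mem_sphere_iff_norm, sub_zero, h]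
      have hwpt : g (circleMap 0 ρ 0) ≠ 0 :=
        hnzρ _ (circleMap_mem_sphere 0 hρ.le 0)
      obtain ⟨n, h, hn1, hhd, hhζ, hfac⟩ := exists_factor hg hζ0 hwpt
      have hgfun : g = fun z => (z - ζ) ^ n * h z := funext hfac
      -- zero set of h
      have hsub : {z : ℂ | ‖z‖ ∈ Set.Icc ρ R ∧ h z = 0}
          ⊆ {z : ℂ | ‖z‖ ∈ Set.Icc ρ R ∧ g z = 0} := by
        rintro z ⟨hz1, hz2⟩
        exact ⟨hz1, by rw [hfac z, hz2, mul_zero]⟩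
      have hfin' : {z : ℂ | ‖z‖ ∈ Set.Icc ρ R ∧ h z = 0}.Finite := hfin.subset hsub
      have hcard' : hfin'.toFinset.card ≤ N := by
        have hss : hfin'.toFinset ⊂ hfin.toFinset := by
          rw [Finset.ssubset_iff_of_subset (Set.Finite.toFinset_subset_toFinset.mpr hsub)]
          refine ⟨ζ, hζF, ?_⟩
          rw [hfin'.mem_toFinset]
          rintro ⟨-, hζh⟩
          exact hhζ hζh
        have := Finset.card_lt_card hss
        omega
      have hnzρ' : ∀ z ∈ sphere (0:ℂ) ρ, h z ≠ 0 := by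
        intro z hz hz0
        exact hnzρ z hz (by rw [hfac z, hz0, mul_zero])
      have hnzR' : ∀ z ∈ sphere (0:ℂ) R, h z ≠ 0 := by
        intro z hz hz0
        exact hnzR z hz (by rw [hfac z, hz0, mul_zero])
      obtain ⟨m', hm'⟩ := ih h hhd hρ hρR hnzρ' hnzR' hfin' hcard'
      have hζsρ : ∀ z ∈ sphere (0:ℂ) ρ, z ≠ ζ := by
        intro z hz hzζ
        rw [mem_sphere_iff_norm, sub_zero, hzζ] at hz
        exact absurd hz.symm (ne_of_lt hζρ)
      have hζsR : ∀ z ∈ sphere (0:ℂ) R, z ≠ ζ := by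
        intro z hz hzζ
        rw [mem_sphere_iff_norm, sub_zero, hzζ] at hz
        exact absurd hz (ne_of_lt hζR)
      have hcR : (∮ z in C(0, R), (z - ζ)⁻¹) = 2 * Real.pi * Complex.I :=
        circleIntegral.integral_sub_inv_of_mem_ball (by
          rw [mem_ball_zero_iff]; exact hζR)
      have hcρ : (∮ z in C(0, ρ), (z - ζ)⁻¹) = 0 :=
        integral_sub_inv_of_outside hρ hζρ
      have hwR := wind_factor hhd ζ n hR hnzR' hζsR hcR
      have hwρ := wind_factor hhd ζ n hρ hnzρ' hζsρ hcρ
      refine ⟨m' + n, ?_⟩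
      rw [hgfun]
      rw [hwR, hwρ, hm']
      push_cast
      ring


def T (j : ℕ) : ℕ := j * (j + 1) / 2

lemma T_succ (j : ℕ) : T (j+1) = T j + (j+1) := by
  show (j+1) * (j+1+1) / 2 = j * (j + 1) / 2 + (j+1)
  have h : (j+1) * (j+1+1) = j * (j+1) + 2 * (j+1) := by ring
  rw [h, Nat.add_mul_div_left _ _ (by norm_num : 0 < 2)]

lemma T_cast (j : ℕ) : (T j : ℝ) = j * (j + 1) / 2 := by
  have h : T j * 2 = j * (j + 1) := Nat.div_mul_cancel (Nat.even_mul_succ_self j).two_dvd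
  have h2 : ((T j : ℕ) : ℝ) * 2 = (j : ℝ) * ((j : ℝ) + 1) := by exact_mod_cast h
  linarith

lemma theta_eq (q x : ℂ) : theta q x = ∑' j : ℕ, q ^ T j * x ^ j := rfl

lemma summable_norm_term {q : ℂ} (hq1 : ‖q‖ < 1) {X : ℝ} (hX : 0 ≤ X) :
    Summable (fun j : ℕ => ‖q‖ ^ T j * X ^ j) := by
  apply summable_of_ratio_norm_eventually_le (r := 1/2) (by norm_num)
  have htend : Filter.Tendsto (fun j : ℕ => ‖q‖ ^ (j+1) * X)
      Filter.atTop (nhds 0) := by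
    rw [show (0:ℝ) = 0 * X by ring]
    exact Filter.Tendsto.mul_const X
      ((tendsto_pow_atTop_nhds_zero_of_lt_one (norm_nonneg q) hq1).comp
        (Filter.tendsto_add_atTop_nat 1))
  have hev : ∀ᶠ j : ℕ in Filter.atTop, ‖q‖ ^ (j+1) * X < 1/2 :=
    htend.eventually_lt_const (by norm_num)
  filter_upwards [hev] with j hj
  have h1 : ‖q‖ ^ T (j+1) * X ^ (j+1)
      = (‖q‖ ^ (j+1) * X) * (‖q‖ ^ T j * X ^ j) := by
    rw [T_succ, pow_add]; ring
  rw [Real.norm_eq_abs, Real.norm_eq_abs, _root_.abs_of_nonneg (by positivity),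
    _root_.abs_of_nonneg (by positivity), h1]
  exact mul_le_mul_of_nonneg_right hj.le (by positivity)

lemma summable_term {q : ℂ} (hq1 : ‖q‖ < 1) (x : ℂ) :
    Summable (fun j : ℕ => q ^ T j * x ^ j) := by
  apply Summable.of_norm
  have h : (fun j : ℕ => ‖q ^ T j * x ^ j‖)
      = fun j => ‖q‖ ^ T j * ‖x‖ ^ j := by
    funext j
    simp [map_mul, map_pow]
  rw [h]
  exact summable_norm_term hq1 (norm_nonneg x)

lemma theta_zero (q : ℂ) : theta q 0 = 1 := by
  rw [theta, tsum_eq_single 0]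
  · norm_num
  · intro j hj
    simp [zero_pow hj]

lemma theta_differentiable {q : ℂ} (hq1 : ‖q‖ < 1) :
    Differentiable ℂ (theta q) := by
  intro x₀
  set X : ℝ := ‖x₀‖ + 1 with hXdef
  have hX0 : 0 < X := by positivity
  set u : ℕ → ℝ := fun j => ‖q‖ ^ T j * (j * X ^ (j-1)) with hu
  have husum : Summable u := by
    apply summable_of_ratio_norm_eventually_le (r := 1/2) (by norm_num)
    have htend : Filter.Tendsto (fun j : ℕ => ‖q‖ ^ (j+1) * (2*X))
        Filter.atTop (nhds 0) := by
      rw [show (0:ℝ) = 0 * (2*X) by ring]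
      exact Filter.Tendsto.mul_const (2*X)
        ((tendsto_pow_atTop_nhds_zero_of_lt_one (norm_nonneg q) hq1).comp
          (Filter.tendsto_add_atTop_nat 1))
    have hev1 : ∀ᶠ j : ℕ in Filter.atTop, ‖q‖ ^ (j+1) * (2*X) < 1/2 :=
      htend.eventually_lt_const (by norm_num)
    have hev2 : ∀ᶠ j : ℕ in Filter.atTop, 1 ≤ j := Filter.eventually_ge_atTop 1
    filter_upwards [hev1, hev2] with j hj hj1
    have hXj : X ^ j = X ^ (j-1) * X := by
      rw [← pow_succ]
      congr 1
      omega
    have e1 : u (j+1) = (‖q‖ ^ (j+1)) * ((j:ℝ)+1) * (X ^ (j-1) * X)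
        * ‖q‖ ^ T j := by
      simp only [hu, T_succ, pow_add, Nat.add_sub_cancel, hXj]
      push_cast
      ring
    have e2 : u j = ‖q‖ ^ T j * (j * X ^ (j-1)) := rfl
    rw [Real.norm_eq_abs, Real.norm_eq_abs, _root_.abs_of_nonneg (by positivity),
      _root_.abs_of_nonneg (by positivity), e1, e2]
    have hj2 : ((j:ℝ)+1) ≤ 2*j := by
      have : (1:ℝ) ≤ j := by exact_mod_cast hj1
      linarith
    have hb1 : (0:ℝ) ≤ ‖q‖ ^ (j+1) := by positivity
    have hb2 : (0:ℝ) ≤ X ^ (j-1) := by positivity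
    have hb3 : (0:ℝ) ≤ ‖q‖ ^ T j := by positivity
    calc ‖q‖ ^ (j+1) * ((j:ℝ)+1) * (X ^ (j-1) * X) * ‖q‖ ^ T j
        ≤ ‖q‖ ^ (j+1) * (2*(j:ℝ)) * (X ^ (j-1) * X) * ‖q‖ ^ T j := by
          apply mul_le_mul_of_nonneg_right _ hb3
          apply mul_le_mul_of_nonneg_right _ (by positivity)
          exact mul_le_mul_of_nonneg_left hj2 hb1
      _ = (‖q‖ ^ (j+1) * (2*X)) * (‖q‖ ^ T j * ((j:ℝ) * X ^ (j-1))) := by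
          ring
      _ ≤ 1/2 * (‖q‖ ^ T j * ((j:ℝ) * X ^ (j-1))) := by
          apply mul_le_mul_of_nonneg_right hj.le
          positivity
  have hFd : ∀ N : ℕ, ∀ x ∈ ball (0:ℂ) X,
      HasDerivAt (fun x : ℂ => ∑ j ∈ Finset.range N, q ^ T j * x ^ j)
        (∑ j ∈ Finset.range N, q ^ T j * ((j:ℂ) * x ^ (j-1))) x := by
    intro N x _
    apply HasDerivAt.fun_sum
    intro j _
    exact (hasDerivAt_pow j x).const_mul _
  have hTU : TendstoUniformlyOn
      (fun N (x : ℂ) => ∑ j ∈ Finset.range N, q ^ T j * ((j:ℂ) * x ^ (j-1)))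
      (fun x => ∑' j : ℕ, q ^ T j * ((j:ℂ) * x ^ (j-1))) Filter.atTop (ball (0:ℂ) X) := by
    apply tendstoUniformlyOn_tsum_nat husum
    intro j x hx
    rw [mem_ball_zero_iff] at hx
    have : ‖q ^ T j * ((j:ℂ) * x ^ (j-1))‖
        = ‖q‖ ^ T j * (j * ‖x‖ ^ (j-1)) := by
      simp [map_mul, map_pow, Complex.norm_natCast]
    rw [this]
    apply mul_le_mul_of_nonneg_left _ (by positivity)
    apply mul_le_mul_of_nonneg_left _ (by positivity)
    exact pow_le_pow_left₀ (norm_nonneg x) (le_of_lt hx) _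
  have hpt : ∀ x ∈ ball (0:ℂ) X,
      Filter.Tendsto (fun N => ∑ j ∈ Finset.range N, q ^ T j * x ^ j)
        Filter.atTop (nhds (theta q x)) := by
    intro x _
    rw [theta_eq]
    exact (summable_term hq1 x).hasSum.tendsto_sum_nat
  have hx₀ : x₀ ∈ ball (0:ℂ) X := by
    rw [mem_ball_zero_iff]
    simp [hXdef]
  exact (hasDerivAt_of_tendstoUniformlyOn isOpen_ball hTU
    (Filter.Eventually.of_forall hFd) hpt hx₀).differentiableAt


lemma summable_u {c₀ : ℝ} (hc₀ : c₀ ∈ Set.Ioo (0:ℝ) 1) :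
    Summable (fun ν : ℕ => c₀ ^ (((ν : ℝ) + 1) ^ 2 / 2)) := by
  obtain ⟨hc0, hc1⟩ := hc₀
  have ha0 : (0:ℝ) ≤ c₀ ^ (2⁻¹ : ℝ) := (Real.rpow_pos_of_pos hc0 _).le
  have ha1 : c₀ ^ (2⁻¹ : ℝ) < 1 := Real.rpow_lt_one hc0.le hc1 (by norm_num)
  have hgeom : Summable (fun ν : ℕ => (c₀ ^ (2⁻¹ : ℝ)) ^ (ν + 1)) := by
    have h := (summable_geometric_of_lt_one ha0 ha1).mul_right (c₀ ^ (2⁻¹ : ℝ))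
    have he : (fun ν : ℕ => (c₀ ^ (2⁻¹ : ℝ)) ^ (ν + 1))
        = fun ν : ℕ => (c₀ ^ (2⁻¹:ℝ)) ^ ν * (c₀ ^ (2⁻¹:ℝ)) := by
      funext ν
      rw [pow_succ]
    rw [he]
    exact h
  apply Summable.of_nonneg_of_le (fun ν => (Real.rpow_pos_of_pos hc0 _).le) _ hgeom
  intro ν
  have h1 : c₀ ^ (((ν : ℝ) + 1) ^ 2 / 2) ≤ c₀ ^ (((ν : ℝ) + 1) / 2) := by
    apply Real.rpow_le_rpow_of_exponent_ge hc0 hc1.le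
    have h2 : (0:ℝ) ≤ (ν:ℝ) := Nat.cast_nonneg ν
    nlinarith
  have h3 : (c₀ ^ (2⁻¹ : ℝ)) ^ (ν + 1) = c₀ ^ (((ν : ℝ) + 1) / 2) := by
    rw [← Real.rpow_natCast (c₀ ^ (2⁻¹ : ℝ)) (ν + 1), ← Real.rpow_mul hc0.le]
    congr 1
    push_cast
    ring
  rw [h3]
  exact h1

lemma theta_term_dominates {c₀ : ℝ} (hc₀ : c₀ ∈ Set.Ioo (0:ℝ) 1)
    (hroot : 2 * ∑' ν : ℕ, c₀ ^ (((ν : ℝ) + 1) ^ 2 / 2) = 1)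
    {q : ℂ} (hq : 0 < ‖q‖) (hqc : ‖q‖ ≤ c₀) (m : ℕ) {x : ℂ}
    (hx : ‖x‖ = ‖q‖ ^ (-((m:ℝ) + 1/2))) :
    ‖(theta q x - q ^ T m * x ^ m)‖ < ‖(q ^ T m * x ^ m)‖ := by
  obtain ⟨hc0, hc1⟩ := hc₀
  have hp1 : ‖q‖ < 1 := lt_of_le_of_lt hqc hc1
  set p : ℝ := ‖q‖ with hpdef
  set r : ℝ := p ^ (-((m:ℝ) + 1/2)) with hrdef
  have hr0 : 0 < r := Real.rpow_pos_of_pos hq _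
  have hnorm : ∀ j : ℕ, ‖(q ^ T j * x ^ j)‖ = p ^ T j * r ^ j := by
    intro j
    rw [norm_mul, norm_pow, norm_pow, hx]
  have e1 : ∀ k : ℕ, (p : ℝ) ^ T k * r ^ k = p ^ ((T k : ℝ) + (-((m:ℝ) + 1/2)) * k) := by
    intro k
    rw [Real.rpow_add hq]
    congr 1
    · exact (Real.rpow_natCast p (T k)).symm
    · rw [hrdef, ← Real.rpow_natCast (p ^ (-((m:ℝ) + 1/2))) k, ← Real.rpow_mul hq.le]
  have hAj : ∀ j : ℕ, p ^ T j * r ^ j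
      = (p ^ T m * r ^ m) * p ^ ((((j:ℝ) - m)^2)/2) := by
    intro j
    rw [e1 j, e1 m, ← Real.rpow_add hq]
    congr 1
    rw [T_cast, T_cast]
    ring
  set M : ℝ := p ^ T m * r ^ m with hMdef
  have hM0 : 0 < M := by positivity
  set w : ℕ → ℝ := fun j => if j = m then 0 else c₀ ^ ((((j:ℝ) - m)^2)/2) with hwdef
  have hwshift : (fun ν : ℕ => w (ν + (m+1)))
      = fun ν : ℕ => c₀ ^ (((ν : ℝ) + 1) ^ 2 / 2) := by
    funext ν
    rw [hwdef]
    simp only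
    rw [if_neg (by omega : ¬ ν + (m+1) = m)]
    congr 1
    push_cast
    ring
  have husum := summable_u (c₀ := c₀) ⟨hc0, hc1⟩
  have hwsum : Summable w := by
    rw [← summable_nat_add_iff (m+1), hwshift]
    exact husum
  have htsum_u : ∑' ν : ℕ, c₀ ^ (((ν : ℝ) + 1) ^ 2 / 2) = 1/2 := by linarith
  have hfirst : ∑ j ∈ Finset.range (m+1), w j
      = ∑ i ∈ Finset.range m, c₀ ^ (((i : ℝ) + 1) ^ 2 / 2) := by
    rw [← Finset.sum_range_reflect]
    rw [Finset.sum_range_succ']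
    have hzero : w (m + 1 - 1 - 0) = 0 := by
      simp only [hwdef, Nat.add_sub_cancel, Nat.sub_zero, if_pos rfl]
    rw [hzero, add_zero]
    apply Finset.sum_congr rfl
    intro i hi
    rw [Finset.mem_range] at hi
    have him : i + 1 ≤ m := hi
    have hne : m + 1 - 1 - (i + 1) ≠ m := by omega
    rw [hwdef]
    simp only
    rw [if_neg hne]
    congr 1
    have hcast : ((m + 1 - 1 - (i + 1) : ℕ) : ℝ) = (m : ℝ) - (i + 1) := by
      have : m + 1 - 1 - (i + 1) = m - (i + 1) := by omega
      rw [this, Nat.cast_sub him]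
      push_cast
      ring
    rw [hcast]
    ring
  have hW : ∑' j, w j < 1 := by
    have hsplit := Summable.sum_add_tsum_nat_add (f := w) (m+1) hwsum
    rw [hwshift] at hsplit
    have h2 := Summable.sum_add_tsum_nat_add (f := fun ν : ℕ => c₀ ^ (((ν : ℝ) + 1) ^ 2 / 2)) m husum
    rw [htsum_u] at h2
    have h3 : 0 < ∑' ν : ℕ, c₀ ^ ((((ν + m : ℕ) : ℝ) + 1) ^ 2 / 2) := by
      apply Summable.tsum_pos ((summable_nat_add_iff m).mpr husum)
        (fun ν => (Real.rpow_pos_of_pos hc0 _).le) 0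
      exact Real.rpow_pos_of_pos hc0 _
    have h4 : ∑ i ∈ Finset.range m, c₀ ^ (((i : ℝ) + 1) ^ 2 / 2) < 1/2 := by
      linarith
    rw [← hsplit, hfirst, htsum_u]
    linarith
  have hsum_f := summable_term hp1 x
  have hdiff : theta q x - q ^ T m * x ^ m
      = ∑' j : ℕ, (if j = m then 0 else q ^ T j * x ^ j) := by
    rw [theta_eq, Summable.tsum_eq_add_tsum_ite hsum_f m]
    ring
  rw [hdiff, hnorm m]
  have hsA : Summable (fun j : ℕ => p ^ T j * r ^ j) := summable_norm_term hp1 hr0.le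
  have hs_ite : Summable (fun j : ℕ => if j = m then (0:ℝ) else p ^ T j * r ^ j) := by
    apply Summable.of_nonneg_of_le _ _ hsA
    · intro j
      split_ifs
      · exact le_refl 0
      · positivity
    · intro j
      split_ifs
      · positivity
      · exact le_refl _
  have hstep1 : ‖(∑' j : ℕ, (if j = m then 0 else q ^ T j * x ^ j))‖
      ≤ ∑' j : ℕ, (if j = m then (0:ℝ) else p ^ T j * r ^ j) := by
    have hnorm_ite : (fun j : ℕ => ‖(if j = m then (0:ℂ) else q ^ T j * x ^ j)‖)
        = fun j : ℕ => if j = m then (0:ℝ) else p ^ T j * r ^ j := by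
      funext j
      split_ifs
      · simp
      · rw [hnorm j]
    calc ‖(∑' j : ℕ, (if j = m then 0 else q ^ T j * x ^ j))‖
        = ‖∑' j : ℕ, (if j = m then (0:ℂ) else q ^ T j * x ^ j)‖ := rfl
      _ ≤ ∑' j : ℕ, ‖(if j = m then (0:ℂ) else q ^ T j * x ^ j)‖ :=
          norm_tsum_le_tsum_norm (by rw [hnorm_ite]; exact hs_ite)
      _ = ∑' j : ℕ, (if j = m then (0:ℝ) else p ^ T j * r ^ j) := by rw [hnorm_ite]
  have hstep2 : (∑' j : ℕ, (if j = m then (0:ℝ) else p ^ T j * r ^ j))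
      ≤ ∑' j : ℕ, M * w j := by
    apply Summable.tsum_le_tsum _ hs_ite (hwsum.mul_left M)
    intro j
    split_ifs with hj
    · subst hj
      simp [hwdef]
    · rw [hAj j]
      rw [hwdef]
      simp only [if_neg hj]
      apply mul_le_mul_of_nonneg_left _ hM0.le
      apply Real.rpow_le_rpow hq.le hqc
      positivity
  have hstep3 : (∑' j : ℕ, M * w j) = M * ∑' j, w j := tsum_mul_left
  calc ‖(∑' j : ℕ, (if j = m then 0 else q ^ T j * x ^ j))‖
      ≤ ∑' j : ℕ, (if j = m then (0:ℝ) else p ^ T j * r ^ j) := hstep1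
    _ ≤ ∑' j : ℕ, M * w j := hstep2
    _ = M * ∑' j, w j := hstep3
    _ < M * 1 := by exact mul_lt_mul_of_pos_left hW hM0
    _ = M := mul_one M


lemma mem_sphere_abs {z : ℂ} {r : ℝ} : z ∈ sphere (0:ℂ) r ↔ ‖z‖ = r := by
  rw [mem_sphere_iff_norm, sub_zero]

lemma theta_ne_zero_inner {c₀ : ℝ} (hc₀ : c₀ ∈ Set.Ioo (0:ℝ) 1)
    (hroot : 2 * ∑' ν : ℕ, c₀ ^ (((ν : ℝ) + 1) ^ 2 / 2) = 1)
    {q : ℂ} (hq : 0 < ‖q‖) (hqc : ‖q‖ ≤ c₀) {x : ℂ}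
    (hx : ‖x‖ ≤ ‖q‖ ^ (-((0:ℝ) + 1/2))) : theta q x ≠ 0 := by
  obtain ⟨hc0, hc1⟩ := hc₀
  have hp1 : ‖q‖ < 1 := lt_of_le_of_lt hqc hc1
  set p : ℝ := ‖q‖ with hpdef
  set r : ℝ := p ^ (-((0:ℝ) + 1/2)) with hrdef
  have hr0 : 0 < r := Real.rpow_pos_of_pos hq _
  have husum := summable_u (c₀ := c₀) ⟨hc0, hc1⟩
  have htsum_u : ∑' ν : ℕ, c₀ ^ (((ν : ℝ) + 1) ^ 2 / 2) = 1/2 := by linarith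
  have hterm : ∀ j : ℕ, j ≠ 0 →
      ‖(q ^ T j * x ^ j)‖ ≤ c₀ ^ (((j:ℝ))^2/2) := by
    intro j hj
    have h1 : ‖(q ^ T j * x ^ j)‖ = p ^ T j * ‖x‖ ^ j := by
      rw [norm_mul, norm_pow, norm_pow]
    have h2 : p ^ T j * ‖x‖ ^ j ≤ p ^ T j * r ^ j :=
      mul_le_mul_of_nonneg_left (pow_le_pow_left₀ (norm_nonneg x) hx j) (by positivity)
    have h3 : p ^ T j * r ^ j = p ^ ((T j : ℝ) + (-((0:ℝ)+1/2)) * j) := by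
      rw [Real.rpow_add hq]
      congr 1
      · exact (Real.rpow_natCast p (T j)).symm
      · rw [hrdef, ← Real.rpow_natCast (p ^ (-((0:ℝ) + 1/2))) j, ← Real.rpow_mul hq.le]
    have h4 : (T j : ℝ) + (-((0:ℝ)+1/2)) * j = ((j:ℝ))^2/2 := by
      rw [T_cast]; ring
    have h5 : p ^ (((j:ℝ))^2/2) ≤ c₀ ^ (((j:ℝ))^2/2) :=
      Real.rpow_le_rpow hq.le hqc (by positivity)
    rw [h1]
    calc p ^ T j * ‖x‖ ^ j ≤ p ^ T j * r ^ j := h2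
      _ = p ^ ((T j : ℝ) + (-((0:ℝ)+1/2)) * j) := h3
      _ = p ^ (((j:ℝ))^2/2) := by rw [h4]
      _ ≤ c₀ ^ (((j:ℝ))^2/2) := h5
  intro h0
  have hsum_f := summable_term hp1 x
  have hsplit := Summable.tsum_eq_add_tsum_ite hsum_f 0
  have hf0 : q ^ T 0 * x ^ 0 = 1 := by norm_num [T]
  rw [theta_eq, hsplit, hf0] at h0
  have h1 : (1:ℝ) ≤ ‖(∑' j : ℕ, (if j = 0 then 0 else q ^ T j * x ^ j))‖ := by
    have he : (∑' j : ℕ, (if j = 0 then 0 else q ^ T j * x ^ j)) = -1 := by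
      linear_combination h0
    rw [he]
    simp
  set v : ℕ → ℝ := fun j => if j = 0 then (0:ℝ) else c₀ ^ (((j:ℝ))^2/2) with hvdef
  have hvshift : (fun ν : ℕ => v (ν + 1)) = fun ν : ℕ => c₀ ^ (((ν : ℝ) + 1) ^ 2 / 2) := by
    funext ν
    rw [hvdef]
    simp only
    rw [if_neg (Nat.succ_ne_zero ν)]
    congr 1
    push_cast
    ring
  have hvsum : Summable v := by
    rw [← summable_nat_add_iff 1, hvshift]
    exact husum
  have htsv : ∑' j, v j = 1/2 := by
    have hsplit2 := Summable.sum_add_tsum_nat_add (f := v) 1 hvsum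
    rw [hvshift, htsum_u] at hsplit2
    have : ∑ i ∈ Finset.range 1, v i = 0 := by simp [hvdef]
    linarith
  have h2 : ‖(∑' j : ℕ, (if j = 0 then 0 else q ^ T j * x ^ j))‖ ≤ 1/2 := by
    have hsn : Summable (fun j : ℕ => ‖(if j = 0 then (0:ℂ) else q ^ T j * x ^ j)‖) := by
      apply Summable.of_nonneg_of_le (fun j => norm_nonneg _) _ hvsum
      intro j
      split_ifs with hj
      · simp [hvdef, hj]
      · rw [hvdef]
        simp only [if_neg hj]
        exact hterm j hj
    calc ‖(∑' j : ℕ, (if j = 0 then 0 else q ^ T j * x ^ j))‖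
        = ‖∑' j : ℕ, (if j = 0 then (0:ℂ) else q ^ T j * x ^ j)‖ := rfl
      _ ≤ ∑' j : ℕ, ‖(if j = 0 then (0:ℂ) else q ^ T j * x ^ j)‖ := norm_tsum_le_tsum_norm hsn
      _ ≤ ∑' j : ℕ, v j := by
          apply Summable.tsum_le_tsum _ hsn hvsum
          intro j
          split_ifs with hj
          · simp [hvdef, hj]
          · rw [hvdef]
            simp only [if_neg hj]
            exact hterm j hj
      _ = 1/2 := htsv
  linarith

end PTFAux

open PTFAux

/-- For 0 < |q| ≤ c₀, where 2·∑_{ν=1}^∞ c₀^{ν²/2} = 1 with c₀ ∈ (0,1),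
θ(q,·) has no multiple zeros. -/
theorem theta_no_multiple_zeros (c₀ : ℝ) (hc₀ : c₀ ∈ Set.Ioo (0 : ℝ) 1)
    (hroot : 2 * ∑' ν : ℕ, c₀ ^ (((ν : ℝ) + 1) ^ 2 / 2) = 1)
    (q : ℂ) (hq : 0 < ‖q‖) (hqc : ‖q‖ ≤ c₀) :
    ¬ ∃ x : ℂ, theta q x = 0 ∧ deriv (theta q) x = 0 := by
  rintro ⟨x₀, hθ0, hθ'0⟩
  have hp1 : ‖q‖ < 1 := lt_of_le_of_lt hqc hc₀.2
  have hθdiff : Differentiable ℂ (theta q) := theta_differentiable hp1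
  have hθat0 : theta q 0 ≠ 0 := by rw [theta_zero]; exact one_ne_zero
  have hqne : q ≠ 0 := by
    intro h
    rw [h] at hq
    simp at hq
  -- factor the double zero
  obtain ⟨n, g, hn1, hgd, hgζ, hfac⟩ := exists_factor hθdiff hθ0 hθat0
  have hfun : theta q = fun z => (z - x₀) ^ n * g z := funext hfac
  have hn2 : 2 ≤ n := by
    rcases eq_or_lt_of_le hn1 with h1 | h1
    · exfalso
      have hder : HasDerivAt (theta q) (g x₀) x₀ := by
        have h3 : HasDerivAt (fun z : ℂ => (z - x₀) * g z)
            (1 * g x₀ + (x₀ - x₀) * deriv g x₀) x₀ :=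
          ((hasDerivAt_id x₀).sub_const x₀).mul (hgd x₀).hasDerivAt
        simp only [one_mul, sub_self, zero_mul, add_zero] at h3
        have h2 : HasDerivAt (fun z : ℂ => (z - x₀) ^ n * g z) (g x₀) x₀ := by
          rw [← h1]
          simpa only [pow_one] using h3
        rw [hfun]
        exact h2
      exact hgζ (by rw [← hder.deriv]; exact hθ'0)
    · exact h1
  -- the circles
  set p : ℝ := ‖q‖ with hpdef
  set R : ℕ → ℝ := fun m => p ^ (-((m:ℝ) + 1/2)) with hRdef
  have hR0 : ∀ m, 0 < R m := fun m => Real.rpow_pos_of_pos hq _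
  have hRmono : ∀ m, R m < R (m+1) := by
    intro m
    apply Real.rpow_lt_rpow_of_exponent_gt hq hp1
    push_cast
    linarith
  -- θ does not vanish on the circles
  have hsph : ∀ m : ℕ, ∀ z ∈ sphere (0:ℂ) (R m), theta q z ≠ 0 := by
    intro m z hz h0
    have hzabs : ‖z‖ = R m := mem_sphere_abs.mp hz
    have hdom := theta_term_dominates hc₀ hroot hq hqc m hzabs
    rw [h0, zero_sub, norm_neg] at hdom
    exact lt_irrefl _ hdom
  -- winding numbers of θ on the circles
  have hwθ : ∀ m : ℕ, wind (theta q) (R m) = (m:ℂ) * (2 * Real.pi * Complex.I) := by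
    intro m
    have hmono : Differentiable ℂ (fun z : ℂ => q ^ T m * z ^ m) :=
      (differentiable_pow m).const_mul _
    have hlt : ∀ z ∈ sphere (0:ℂ) (R m),
        ‖(theta q z - q ^ T m * z ^ m)‖ < ‖(q ^ T m * z ^ m)‖ := by
      intro z hz
      exact theta_term_dominates hc₀ hroot hq hqc m (mem_sphere_abs.mp hz)
    have hr := wind_rouche hmono hθdiff (hR0 m) hlt
    rw [hr, wind_monomial (pow_ne_zero _ hqne) m (hR0 m)]
  -- the double zero is not inside the smallest circle
  have hbig : R 0 < ‖x₀‖ := by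
    by_contra hle
    push_neg at hle
    apply theta_ne_zero_inner hc₀ hroot hq hqc _ hθ0
    have : R 0 = ‖q‖ ^ (-((0:ℝ) + 1/2)) := by
      rw [hRdef, hpdef]
      norm_num
    rw [← this]
    exact hle
  -- find the annulus containing x₀
  have hex : ∃ m : ℕ, ‖x₀‖ < R m := by
    have hinv : (1:ℝ) < p⁻¹ := by
      rw [lt_inv_comm₀]
      · simpa using hp1
      · norm_num
      · exact hq
    have h1 : ∀ m : ℕ, (p⁻¹) ^ m ≤ R m := by
      intro m
      have h2 : (p⁻¹ : ℝ) ^ m = p ^ (-(m:ℝ)) := by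
        rw [← Real.rpow_neg_one p, ← Real.rpow_natCast (p ^ (-1:ℝ)) m,
          ← Real.rpow_mul hq.le]
        norm_num
      rw [h2, hRdef]
      apply Real.rpow_le_rpow_of_exponent_ge hq hp1.le
      push_cast
      linarith
    obtain ⟨m, hm⟩ := ((tendsto_pow_atTop_atTop_of_one_lt hinv).eventually
      (Filter.eventually_gt_atTop (‖x₀‖))).exists
    exact ⟨m, lt_of_lt_of_le hm (h1 m)⟩
  set k := Nat.find hex with hkdef
  have hklt : ‖x₀‖ < R k := Nat.find_spec hex
  have hk0 : k ≠ 0 := by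
    intro h
    rw [h] at hklt
    exact absurd hklt (not_lt_of_gt hbig)
  obtain ⟨k', hkk'⟩ : ∃ k', k = k' + 1 := ⟨k - 1, by omega⟩
  have hmin : ¬ (‖x₀‖ < R k') := Nat.find_min hex (by omega)
  push_neg at hmin
  have hkgt : R k' < ‖x₀‖ := by
    rcases eq_or_lt_of_le hmin with h | h
    · exact absurd hθ0 (hsph k' x₀ (mem_sphere_abs.mpr h.symm))
    · exact h
  rw [hkk'] at hklt
  -- wind of θ via factorization
  have hζs : ∀ m : ℕ, ∀ z ∈ sphere (0:ℂ) (R m), z ≠ x₀ := by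
    intro m z hz h
    exact hsph m z hz (h ▸ hθ0)
  have hgnz : ∀ m : ℕ, ∀ z ∈ sphere (0:ℂ) (R m), g z ≠ 0 := by
    intro m z hz hgz
    exact hsph m z hz (by rw [hfac z, hgz, mul_zero])
  have hcR : (∮ z in C(0, R (k'+1)), (z - x₀)⁻¹) = 2 * Real.pi * Complex.I :=
    circleIntegral.integral_sub_inv_of_mem_ball
      (by rw [mem_ball_zero_iff]; exact hklt)
  have hcρ : (∮ z in C(0, R k'), (z - x₀)⁻¹) = 0 :=
    integral_sub_inv_of_outside (hR0 k') hkgt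
  have hfacW1 := wind_factor hgd x₀ n (hR0 (k'+1)) (hgnz (k'+1)) (hζs (k'+1)) hcR
  have hfacW2 := wind_factor hgd x₀ n (hR0 k') (hgnz k') (hζs k') hcρ
  -- zeros of g in the closed annulus are finite
  have hfin : {z : ℂ | ‖z‖ ∈ Set.Icc (R k') (R (k'+1)) ∧ g z = 0}.Finite := by
    apply Set.Finite.subset
      (zeros_finite hgd hgζ (isCompact_closedBall (0:ℂ) (R (k'+1))))
    rintro z ⟨hz1, hz2⟩
    refine ⟨?_, hz2⟩
    rw [mem_closedBall_zero_iff]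
    exact hz1.2
  obtain ⟨m', hm'⟩ := wind_mono_aux hfin.toFinset.card g hgd (hR0 k') (hRmono k').le
    (hgnz k') (hgnz (k'+1)) hfin le_rfl
  -- final contradiction
  have e1 := hwθ (k'+1)
  rw [hfun, hfacW1] at e1
  have e2 := hwθ k'
  rw [hfun, hfacW2] at e2
  simp only [mul_zero, zero_add] at e2
  rw [hm', e2] at e1
  -- e1 : n * (2πi) + (0? ...)
  have htpi : (2 * (Real.pi:ℂ) * Complex.I) ≠ 0 := by
    simp [Real.pi_ne_zero, Complex.I_ne_zero, Complex.ofReal_ne_zero]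
  have ecast : ((n : ℂ) + m' + k') = ((k' : ℂ) + 1) := by
    have e3 : ((n:ℂ) + m' + k') * (2 * Real.pi * Complex.I)
        = ((k':ℂ) + 1) * (2 * Real.pi * Complex.I) := by
      push_cast at e1 ⊢
      linear_combination e1
    exact mul_right_cancel₀ htpi e3
  have : n + m' + k' = k' + 1 := by exact_mod_cast ecast
  omega
end

section
/- Let q ∈ ℂ with 0 < |q| ≤ 1/3 and let k ≥ 2 be an integer. If x ∈ ℂ satisfies |x| = |q|^{-k-1/2}, then θ(q,x) = ∑_{j=0}^∞ q^{j(j+1)/2} x^j ≠ 0. -/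
set_option maxHeartbeats 1600000

open Complex


section aux
variable {s τ c y z : ℝ}

lemma aux_hc2 (hs0 : 0 < s) (hτ0 : 0 < τ) (hτ : τ ≤ 2*s) : s^2*τ^2 - 2*s^4 ≤ 2*s^4 := by
  nlinarith [mul_nonneg (mul_nonneg (sq_nonneg s) (by linarith : (0:ℝ) ≤ 2*s - τ)) (by linarith : (0:ℝ) ≤ 2*s + τ)]

lemma aux_hs4 (hs45 : 0.45 ≤ s) (hs : s ≤ 0.57736) : s^4 ≤ 0.111119 := by
  have hs2 : s^2 ≤ 0.3333446 := by nlinarith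
  nlinarith [sq_nonneg s, sq_nonneg (s^2)]

lemma aux_X1 (hyz : y^2 + z^2 = 1) : y^4 - 6*y^2*z^2 + z^4 ≤ 1 := by
  nlinarith [sq_nonneg (y*z), sq_nonneg (y^2+z^2)]

lemma aux_X2 (hyz : y^2 + z^2 = 1) : -1 ≤ y^4 - 6*y^2*z^2 + z^4 := by
  nlinarith [sq_nonneg (y^2 - z^2)]

-- c*X ≥ -M when |c| ≤ M, |X| ≤ 1-ish bounds
lemma aux_prod_lb {M X : ℝ} (hc1 : -M ≤ c) (hc2 : c ≤ M) (h1 : -X ≤ y) (h2 : y ≤ X) : -(M*X) ≤ c*y := by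
  nlinarith [mul_nonneg (by linarith : (0:ℝ) ≤ M + c) (by linarith : (0:ℝ) ≤ X + y),
    mul_nonneg (by linarith : (0:ℝ) ≤ M - c) (by linarith : (0:ℝ) ≤ X - y)]

lemma aux_cube (hy75 : -0.75 ≤ y) (hy : y ≤ 0) (hyz : y^2 + z^2 = 1) :
    -0.28 ≤ y*(y^2-z^2) ∧ y*(y^2-z^2) ≤ 0.28 := by
  have hy3 : y^3 + y*z^2 = y := by linear_combination y*hyz
  constructor
  · nlinarith [sq_nonneg (y + 0.408), sq_nonneg y, sq_nonneg z, mul_nonneg (by linarith : (0:ℝ) ≤ -y) (sq_nonneg (y+0.408))]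
  · nlinarith [sq_nonneg (y + 0.408), sq_nonneg y, sq_nonneg z, mul_nonneg (by linarith : (0:ℝ) ≤ -y) (sq_nonneg (y+0.408))]

lemma aux_A (hs45 : 0.45 ≤ s) (hs : s ≤ 0.57736) (hτ0 : 0 < τ) (hτ : τ ≤ 2*s) :
    0.0675 ≤ 1 - τ + (s^2*τ^2 - 2*s^4) := by
  have h1 : (0:ℝ) ≤ (2*s - τ)*(1 - s^2*(2*s + τ)) := by
    apply mul_nonneg (by linarith)
    nlinarith [mul_nonneg (mul_nonneg hτ0.le hτ0.le) hτ0.le, sq_nonneg s, sq_nonneg (s-0.57736), mul_nonneg (sq_nonneg s) (by linarith : (0:ℝ) ≤ 2*s - τ)]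
  have h2 : 0.0675 ≤ 1 - 2*s + 2*s^4 := by
    nlinarith [mul_nonneg (by linarith : (0:ℝ) ≤ 0.57736 - s) (by nlinarith [mul_nonneg (mul_nonneg (by linarith : (0:ℝ) ≤ s) (by linarith : (0:ℝ) ≤ s)) (by linarith : (0:ℝ) ≤ s)] : (0:ℝ) ≤ 2 - 8*s^3)]
  nlinarith [h1]

lemma aux_br25 (hs45 : 0.45 ≤ s) (hs : s ≤ 0.57736) (hτ : τ ≤ 2*s) (hτ7 : 0.7 < τ) :
    0.25 ≤ τ - 4*(s^2*τ^2 - 2*s^4) := by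
  have st1 : (0:ℝ) ≤ (2*s - τ)*(4*s^2*(τ+2*s) - 1) := by
    apply mul_nonneg (by linarith)
    nlinarith [mul_nonneg (by linarith : (0:ℝ) ≤ s - 0.45) (by linarith : (0:ℝ) ≤ s + 0.45),
      mul_nonneg (by linarith : (0:ℝ) ≤ s - 0.45) (sq_nonneg s)]
  have st2 : (0:ℝ) ≤ (0.57736 - s)*(8*(s+0.57736)*(s^2+0.3333446) - 2) := by
    apply mul_nonneg (by linarith)
    nlinarith [mul_nonneg (by linarith : (0:ℝ) ≤ s - 0.45) (by linarith : (0:ℝ) ≤ s + 0.45),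
      mul_nonneg (by linarith : (0:ℝ) ≤ s - 0.45) (sq_nonneg s)]
  nlinarith [st1, st2]

lemma aux_m1neg (hy : y ≤ 0) (hy1 : -1 ≤ y) (hyz : y^2 + z^2 = 1) : -1 ≤ y*(y^2-z^2) := by
  have hy3 : y^3 + y*z^2 = y := by linear_combination y*hyz
  nlinarith [mul_nonneg (by linarith : (0:ℝ) ≤ -y) (sq_nonneg z)]

lemma aux_prodneg (hy75 : y ≤ -0.75) (hyz : y^2 + z^2 = 1) : y*(y^2-z^2) ≤ 0 := by
  have h18 : (0.125:ℝ) ≤ y^2 - z^2 := by nlinarith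
  nlinarith [mul_nonneg (by linarith : (0:ℝ) ≤ -y) (by linarith : (0:ℝ) ≤ y^2 - z^2)]

end aux

lemma core3 (s τ c y z : ℝ) (hs45 : 0.45 ≤ s) (hs : s ≤ 0.57736)
    (hτ0 : 0 < τ) (hτ : τ ≤ 2*s) (hc : c = s^2*τ^2 - 2*s^4)
    (hyz : y^2 + z^2 = 1) (hz : 0 ≤ z) :
    0.015 ≤ |1 + τ*y + c*(y^4 - 6*y^2*z^2 + z^4)| ∨
    0.015 ≤ |τ*z + c*(4*y^3*z - 4*y*z^3)| := by
  have hs0 : (0:ℝ) < s := by linarith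
  have hc2 : c ≤ 2*s^4 := hc ▸ aux_hc2 hs0 hτ0 hτ
  have hc1 : -(2*s^4) ≤ c := by rw [hc]; nlinarith [sq_nonneg (s*τ)]
  have hs4 : s^4 ≤ 0.111119 := aux_hs4 hs45 hs
  have hy1 : y^2 ≤ 1 := by nlinarith [sq_nonneg z]
  have hy1' : -1 ≤ y := by nlinarith [sq_nonneg (y+1)]
  have hCX1 : -(2*s^4*1) ≤ c*(y^4 - 6*y^2*z^2 + z^4) :=
    aux_prod_lb hc1 hc2 (by linarith [aux_X2 hyz]) (aux_X1 hyz)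
  rcases le_or_gt 0 y with hy | hy
  · left
    have h1 : (0.015:ℝ) ≤ 1 + τ*y + c*(y^4 - 6*y^2*z^2 + z^4) := by
      linarith [mul_nonneg hτ0.le hy]
    rw [_root_.abs_of_nonneg (by linarith)]; linarith
  rcases le_or_gt τ 0.7 with hτ7 | hτ7
  · left
    have h1 : (0.015:ℝ) ≤ 1 + τ*y + c*(y^4 - 6*y^2*z^2 + z^4) := by
      have := mul_le_mul_of_nonneg_left hy1' hτ0.le
      linarith
    rw [_root_.abs_of_nonneg (by linarith)]; linarith
  rcases le_or_gt (-0.75) y with hy75 | hy75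
  · right
    have hz2 : 0.4375 ≤ z^2 := by nlinarith
    have hz66 : 0.66 ≤ z := by nlinarith [sq_nonneg (z - 0.66)]
    obtain ⟨hcu1, hcu2⟩ := aux_cube hy75 hy.le hyz
    have hbr : 0.44 ≤ τ + 4*c*(y*(y^2-z^2)) := by
      have := aux_prod_lb hc1 hc2 (by linarith : -(0.28) ≤ y*(y^2-z^2)) hcu2
      nlinarith
    have h1 : (0.015:ℝ) ≤ τ*z + c*(4*y^3*z - 4*y*z^3) := by
      have heq : τ*z + c*(4*y^3*z - 4*y*z^3) = z*(τ + 4*c*(y*(y^2-z^2))) := by ring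
      rw [heq]
      nlinarith [mul_le_mul hz66 hbr (by norm_num) (by linarith)]
    rw [_root_.abs_of_nonneg (by linarith)]; linarith
  have hA : 0.0675 ≤ 1 - τ + c := hc ▸ aux_A hs45 hs hτ0 hτ
  rcases le_or_gt (1 + y) 0.014 with heta | heta
  · left
    have hkey : 1 + τ*y + c*(y^4 - 6*y^2*z^2 + z^4) =
        (1 - τ + c) + τ*(1+y) + c*((y^4 - 6*y^2*z^2 + z^4) - 1) := by ring
    have hz2 : z^2 ≤ 0.028 := by nlinarith
    have hXsmall : -0.05 ≤ c*((y^4 - 6*y^2*z^2 + z^4) - 1) := by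
      have hXδ : (y^4 - 6*y^2*z^2 + z^4) - 1 = -8*y^2*z^2 := by linear_combination (y^2+z^2+1)*hyz
      rw [hXδ]
      have h8 : 8*y^2*z^2 ≤ 0.224 := by nlinarith [mul_nonneg (sq_nonneg y) (sq_nonneg z), mul_le_mul hy1 hz2 (sq_nonneg z) (by norm_num : (0:ℝ)≤1)]
      have := aux_prod_lb (y := -8*y^2*z^2) hc1 hc2 (by nlinarith [mul_nonneg (sq_nonneg y) (sq_nonneg z)] : -(0.224) ≤ -8*y^2*z^2) (by nlinarith [mul_nonneg (sq_nonneg y) (sq_nonneg z)])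
      nlinarith
    have h1 : (0.015:ℝ) ≤ 1 + τ*y + c*(y^4 - 6*y^2*z^2 + z^4) := by
      rw [hkey]
      linarith [mul_nonneg hτ0.le (by linarith : (0:ℝ) ≤ 1 + y)]
    rw [_root_.abs_of_nonneg (by linarith)]; linarith
  · right
    have hz156 : 0.156 ≤ z := by nlinarith [sq_nonneg (z - 0.156)]
    have hbr : 0.25 ≤ τ + 4*c*(y*(y^2-z^2)) := by
      rcases le_or_gt 0 c with hcpos | hcneg
      · have hm1 := aux_m1neg hy.le hy1' hyz
        have h4c : τ - 4*c ≤ τ + 4*c*(y*(y^2-z^2)) := by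
          nlinarith [mul_nonneg hcpos (by linarith : (0:ℝ) ≤ 1 + y*(y^2-z^2))]
        have h25 := aux_br25 hs45 hs hτ hτ7
        rw [← hc] at h25
        linarith
      · have hprod := aux_prodneg hy75.le hyz
        nlinarith [mul_nonneg (by linarith : (0:ℝ) ≤ -c) (by linarith : (0:ℝ) ≤ -(y*(y^2-z^2)))]
    have h1 : (0.015:ℝ) ≤ τ*z + c*(4*y^3*z - 4*y*z^3) := by
      have heq : τ*z + c*(4*y^3*z - 4*y*z^3) = z*(τ + 4*c*(y*(y^2-z^2))) := by ring
      rw [heq]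
      nlinarith [mul_le_mul hz156 hbr (by norm_num) (by linarith)]
    rw [_root_.abs_of_nonneg (by linarith)]; linarith



lemma re_im_calc (τ c : ℝ) (w : ℂ) :
    (1 + (τ:ℂ)*w + (c:ℂ)*w^4).re
      = 1 + τ*w.re + c*(w.re^4 - 6*w.re^2*w.im^2 + w.im^4) ∧
    (1 + (τ:ℂ)*w + (c:ℂ)*w^4).im
      = τ*w.im + c*(4*w.re^3*w.im - 4*w.re*w.im^3) := by
  have h4 : w^4 = w*w*w*w := by ring
  rw [h4]
  constructor <;>
    · simp only [Complex.add_re, Complex.add_im, Complex.mul_re, Complex.mul_im,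
        Complex.ofReal_re, Complex.ofReal_im, Complex.one_re, Complex.one_im]
      ring

lemma core2' (s τ c : ℝ) (w : ℂ) (hs45 : 0.45 ≤ s) (hs : s ≤ 0.57736)
    (hτ0 : 0 < τ) (hτ : τ ≤ 2*s) (hc : c = s^2*τ^2 - 2*s^4)
    (hw : ‖w‖ = 1) (hz : 0 ≤ w.im) :
    0.015 ≤ ‖1 + (τ:ℂ)*w + (c:ℂ)*w^4‖ := by
  have hyz : w.re^2 + w.im^2 = 1 := by
    have h := Complex.sq_norm w
    rw [hw, Complex.normSq_apply] at h
    nlinarith [h]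
  obtain ⟨hre, him⟩ := re_im_calc τ c w
  rcases core3 s τ c w.re w.im hs45 hs hτ0 hτ hc hyz hz with h | h
  · calc (0.015:ℝ) ≤ |(1 + (τ:ℂ)*w + (c:ℂ)*w^4).re| := by rw [hre]; exact h
      _ ≤ ‖1 + (τ:ℂ)*w + (c:ℂ)*w^4‖ := Complex.abs_re_le_norm _
  · calc (0.015:ℝ) ≤ |(1 + (τ:ℂ)*w + (c:ℂ)*w^4).im| := by rw [him]; exact h
      _ ≤ ‖1 + (τ:ℂ)*w + (c:ℂ)*w^4‖ := Complex.abs_im_le_norm _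

lemma core2 (s τ c : ℝ) (w : ℂ) (hs45 : 0.45 ≤ s) (hs : s ≤ 0.57736)
    (hτ0 : 0 < τ) (hτ : τ ≤ 2*s) (hc : c = s^2*τ^2 - 2*s^4)
    (hw : ‖w‖ = 1) :
    0.015 ≤ ‖1 + (τ:ℂ)*w + (c:ℂ)*w^4‖ := by
  rcases le_or_gt 0 w.im with hz | hz
  · exact core2' s τ c w hs45 hs hτ0 hτ hc hw hz
  · have hconj : (starRingEnd ℂ) (1 + (τ:ℂ)*w + (c:ℂ)*w^4)
        = 1 + (τ:ℂ)*((starRingEnd ℂ) w) + (c:ℂ)*((starRingEnd ℂ) w)^4 := by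
      simp [map_add, map_mul, map_pow, Complex.conj_ofReal]
    have h1 := core2' s τ c ((starRingEnd ℂ) w) hs45 hs hτ0 hτ hc
      (by rwa [Complex.norm_conj]) (by simp [Complex.conj_im]; linarith)
    rw [← hconj] at h1
    rwa [Complex.norm_conj] at h1

lemma core (s : ℝ) (hs0 : 0 < s) (hs : s ≤ 0.57736) (a b : ℂ)
    (ha : ‖a‖ = s) (hb : ‖b‖ = s) :
    2*s^9/(1 - s^7) < ‖1 + a + b + a*b*(a^2 + b^2)‖ := by
  have hs1 : s < 1 := by linarith
  have hs7 : s^7 < 1 := by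
    calc s^7 ≤ s := by nlinarith [pow_le_one₀ hs0.le hs1.le (n := 6), pow_nonneg hs0.le 6]
    _ < 1 := hs1
  have hs7' : (0:ℝ) < 1 - s^7 := by linarith
  have htri : ∀ Z : ℂ, 1 - ‖Z‖ ≤ ‖1 + Z‖ := by
    intro Z
    have h := norm_add_le (1 + Z) (-Z)
    simp at h
    linarith [h]
  rcases le_or_gt s 0.45 with h45 | h45
  · -- crude bound
    have habs2 : ‖a^2+b^2‖ ≤ s^2 + s^2 := by
      calc ‖a^2+b^2‖ ≤ ‖a^2‖ + ‖b^2‖ := norm_add_le _ _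
        _ = s^2 + s^2 := by rw [norm_pow, norm_pow, ha, hb]
    have habm : ‖a*b*(a^2+b^2)‖ ≤ s*s*(s^2+s^2) := by
      rw [norm_mul, norm_mul, ha, hb]
      apply mul_le_mul_of_nonneg_left habs2
      positivity
    have hZ : ‖a + b + a*b*(a^2+b^2)‖ ≤ 2*s + 2*s^4 := by
      calc ‖a + b + a*b*(a^2+b^2)‖
          ≤ ‖a + b‖ + ‖a*b*(a^2+b^2)‖ := norm_add_le _ _
        _ ≤ (‖a‖ + ‖b‖) + s*s*(s^2+s^2) :=
            add_le_add (norm_add_le a b) habm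
        _ = 2*s + 2*s^4 := by rw [ha, hb]; ring
    have hG : 1 - (2*s + 2*s^4) ≤ ‖1 + a + b + a*b*(a^2+b^2)‖ := by
      have heq : (1:ℂ) + a + b + a*b*(a^2+b^2) = 1 + (a + b + a*b*(a^2+b^2)) := by ring
      rw [heq]
      linarith [htri (a + b + a*b*(a^2+b^2)), hZ]
    have h4 := pow_le_pow_left₀ hs0.le h45 4
    have h7 := pow_le_pow_left₀ hs0.le h45 7
    have h9 := pow_le_pow_left₀ hs0.le h45 9
    norm_num at h4 h7 h9
    rw [div_lt_iff₀ hs7']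
    have hlow : (0.0179:ℝ) ≤ 1 - (2*s+2*s^4) := by linarith
    have key := mul_le_mul_of_nonneg_right (hlow.trans hG) hs7'.le
    nlinarith [key, h7, h9]
  · -- main region
    have h9 := pow_le_pow_left₀ hs0.le hs 9
    have h7 := pow_le_pow_left₀ hs0.le hs 7
    norm_num at h7 h9
    have hB : 2*s^9/(1 - s^7) < 0.015 := by
      rw [div_lt_iff₀ hs7']
      nlinarith [h7, h9]
    suffices h : 0.015 ≤ ‖1 + a + b + a*b*(a^2 + b^2)‖ by linarith
    rcases eq_or_ne (a + b) 0 with hu | hu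
    · have hba : b = -a := by linear_combination hu
      have heq : (1:ℂ) + a + b + a*b*(a^2+b^2) = 1 + (-2*a^4) := by rw [hba]; ring
      have habs4 : ‖-2*a^4‖ = 2*s^4 := by
        rw [norm_mul, norm_pow, ha]
        simp
      rw [heq]
      have hs4 : s^4 ≤ 0.111119 := by nlinarith [pow_le_pow_left₀ hs0.le hs 4]
      calc (0.015:ℝ) ≤ 1 - 2*s^4 := by linarith
        _ ≤ ‖1 + (-2*a^4)‖ := by
            have := htri (-2*a^4)
            rw [habs4] at this
            linarith
    · set u := a + b with hudef
      set τ := ‖u‖ with hτdef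
      have hτ0 : 0 < τ := by
        rw [hτdef]
        exact norm_pos_iff.mpr hu
      have hτC : (τ:ℂ) ≠ 0 := by
        simp only [ne_eq, Complex.ofReal_eq_zero]
        exact hτ0.ne'
      set w : ℂ := u / (τ:ℂ) with hwdef
      have hw : ‖w‖ = 1 := by
        rw [hwdef, norm_div, Complex.norm_real, Real.norm_eq_abs, abs_of_pos hτ0]
        rw [← hτdef]; exact div_self hτ0.ne'
      have hu' : u = (τ:ℂ) * w := by
        rw [hwdef]
        field_simp
      have hτ2s : τ ≤ 2*s := by
        rw [hτdef, hudef]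
        calc ‖a+b‖ ≤ ‖a‖ + ‖b‖ := norm_add_le _ _
          _ = 2*s := by rw [ha, hb]; ring
      -- a*b = s^2 w^2
      have hconja : a * (starRingEnd ℂ) a = ((s^2 : ℝ):ℂ) := by
        rw [Complex.mul_conj, Complex.normSq_eq_norm_sq, ha]
      have hconjb : b * (starRingEnd ℂ) b = ((s^2 : ℝ):ℂ) := by
        rw [Complex.mul_conj, Complex.normSq_eq_norm_sq, hb]
      have hkey1 : (a*b) * (starRingEnd ℂ) u = ((s^2:ℝ):ℂ) * u := by
        rw [hudef, map_add]
        calc (a*b) * ((starRingEnd ℂ) a + (starRingEnd ℂ) b)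
            = (a * (starRingEnd ℂ) a) * b + (b * (starRingEnd ℂ) b) * a := by ring
          _ = ((s^2:ℝ):ℂ) * (a+b) := by rw [hconja, hconjb]; ring
      have hwconj : w * (starRingEnd ℂ) w = 1 := by
        rw [Complex.mul_conj, Complex.normSq_eq_norm_sq, hw]
        norm_num
      have hkey2 : a*b = ((s^2:ℝ):ℂ) * w^2 := by
        have h2 : (a*b) * ((τ:ℂ) * (starRingEnd ℂ) w) = ((s^2:ℝ):ℂ) * ((τ:ℂ) * w) := by
          have : (starRingEnd ℂ) u = (τ:ℂ) * (starRingEnd ℂ) w := by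
            rw [hu', map_mul, Complex.conj_ofReal]
          rw [← this, hkey1, hu']
        have h3 : (a*b) * (starRingEnd ℂ) w = ((s^2:ℝ):ℂ) * w := by
          apply mul_left_cancel₀ hτC
          linear_combination h2
        calc a*b = (a*b) * ((starRingEnd ℂ) w * w) := by rw [mul_comm ((starRingEnd ℂ) w) w, hwconj]; ring
          _ = (((s^2:ℝ):ℂ) * w) * w := by rw [← mul_assoc, h3]
          _ = ((s^2:ℝ):ℂ) * w^2 := by ring
      have hGeq : (1:ℂ) + a + b + a*b*(a^2+b^2)
          = 1 + (τ:ℂ)*w + (((s^2*τ^2 - 2*s^4 : ℝ)):ℂ)*w^4 := by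
        have hab2 : a^2 + b^2 = u^2 - 2*(a*b) := by rw [hudef]; ring
        rw [show (1:ℂ) + a + b + a*b*(a^2+b^2) = 1 + u + (a*b)*(a^2+b^2) from by rw [hudef]; ring,
          hab2, hkey2, hu']
        push_cast
        ring
      rw [hGeq]
      exact core2 s τ (s^2*τ^2 - 2*s^4) w (by linarith) hs hτ0 hτ2s rfl hw


-- |q^(j(j+1)/2) x^j| in rpow form
lemma abs_term (q x : ℂ) (k : ℕ) (hq : 0 < ‖q‖)
    (hx : ‖x‖ = ‖q‖ ^ (-(k : ℝ) - 1 / 2)) (j : ℕ) :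
    ‖q ^ (j * (j + 1) / 2) * x ^ j‖
      = ‖q‖ ^ (((((j:ℝ)) - k)^2 - (k:ℝ)^2)/2) := by
  set r := ‖q‖ with hr
  have hcast : ((j * (j + 1) / 2 : ℕ) : ℝ) = (j:ℝ) * ((j:ℝ)+1) / 2 := by
    rw [Nat.cast_div (Nat.even_mul_succ_self j).two_dvd (by norm_num)]
    push_cast
    ring
  rw [norm_mul, norm_pow, norm_pow, hx, ← hr]
  rw [← Real.rpow_natCast r (j*(j+1)/2), ← Real.rpow_natCast (r ^ (-(k:ℝ) - 1/2)) j,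
    ← Real.rpow_mul hq.le, ← Real.rpow_add hq, hcast]
  congr 1
  ring

lemma abs_term_dist (q x : ℂ) (k : ℕ) (hq : 0 < ‖q‖)
    (hx : ‖x‖ = ‖q‖ ^ (-(k : ℝ) - 1 / 2)) (j m : ℕ)
    (hm : (((j:ℝ)) - k)^2 = (m:ℝ)^2) :
    ‖q ^ (j * (j + 1) / 2) * x ^ j‖
      = ‖q‖ ^ (-((k:ℝ)^2)/2) * (‖q‖ ^ ((1:ℝ)/2)) ^ (m^2) := by
  set r := ‖q‖ with hr
  rw [abs_term q x k hq hx j, hm]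
  rw [← Real.rpow_natCast (r ^ ((1:ℝ)/2)) (m^2), ← Real.rpow_mul hq.le, ← Real.rpow_add hq]
  congr 1
  push_cast
  ring


lemma tri_succ (j : ℕ) : (j+1)*(j+2)/2 = j*(j+1)/2 + (j+1) := by
  have h := Nat.add_mul_div_left (j*(j+1)) (j+1) (show 0 < 2 by norm_num)
  have h2 : (j+1)*(j+2) = j*(j+1) + 2*(j+1) := by ring
  omega

-- five-term factorization
lemma five_factor (q x : ℂ) (n : ℕ) (hq : q ≠ 0) (hx : x ≠ 0) :
    (fun j : ℕ => q ^ (j * (j + 1) / 2) * x ^ j) n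
      + (fun j : ℕ => q ^ (j * (j + 1) / 2) * x ^ j) (n+1)
      + (fun j : ℕ => q ^ (j * (j + 1) / 2) * x ^ j) (n+2)
      + (fun j : ℕ => q ^ (j * (j + 1) / 2) * x ^ j) (n+3)
      + (fun j : ℕ => q ^ (j * (j + 1) / 2) * x ^ j) (n+4)
      = (q ^ ((n+2) * (n+3) / 2) * x ^ (n+2)) *
        (1 + (q^(n+3) * x) + (q^(n+2) * x)⁻¹
          + (q^(n+3) * x) * (q^(n+2) * x)⁻¹ * ((q^(n+3) * x)^2 + ((q^(n+2) * x)⁻¹)^2)) := by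
  simp only []
  have e1 : (n+1)*(n+2)/2 = n*(n+1)/2 + (n+1) := tri_succ n
  have e2 : (n+2)*(n+3)/2 = n*(n+1)/2 + (2*n+3) := by have h1 := tri_succ n; have h2 : (n+2)*(n+3)/2 = (n+1)*(n+2)/2 + (n+2) := tri_succ (n+1); omega
  have e3 : (n+3)*(n+4)/2 = n*(n+1)/2 + (3*n+6) := by have h1 := tri_succ n; have h2 : (n+2)*(n+3)/2 = (n+1)*(n+2)/2 + (n+2) := tri_succ (n+1); have h3 : (n+3)*(n+4)/2 = (n+2)*(n+3)/2 + (n+3) := tri_succ (n+2); omega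
  have e4 : (n+4)*(n+5)/2 = n*(n+1)/2 + (4*n+10) := by have h1 := tri_succ n; have h2 : (n+2)*(n+3)/2 = (n+1)*(n+2)/2 + (n+2) := tri_succ (n+1); have h3 : (n+3)*(n+4)/2 = (n+2)*(n+3)/2 + (n+3) := tri_succ (n+2); have h4 : (n+4)*(n+5)/2 = (n+3)*(n+4)/2 + (n+4) := tri_succ (n+3); omega
  rw [show (n+1)*((n+1)+1)/2 = n*(n+1)/2 + (n+1) from e1,
      show (n+2)*((n+2)+1)/2 = n*(n+1)/2 + (2*n+3) from e2,
      show (n+3)*((n+3)+1)/2 = n*(n+1)/2 + (3*n+6) from e3,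
      show (n+4)*((n+4)+1)/2 = n*(n+1)/2 + (4*n+10) from e4]
  field_simp [hq, hx]
  ring

theorem theta_ne_zero_on_circles' (q x : ℂ) (k : ℕ) (hk : 2 ≤ k)
    (hq : 0 < ‖q‖) (hq3 : ‖q‖ ≤ 1 / 3)
    (hx : ‖x‖ = ‖q‖ ^ (-(k : ℝ) - 1 / 2)) :
    (∑' j : ℕ, q ^ (j * (j + 1) / 2) * x ^ j) ≠ 0 := by
  obtain ⟨n, rfl⟩ : ∃ n, k = n + 2 := ⟨k - 2, by omega⟩
  set t : ℕ → ℂ := fun j => q ^ (j * (j + 1) / 2) * x ^ j with htdef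
  set r := ‖q‖ with hrdef
  have hq0 : q ≠ 0 := by
    intro h
    have : r = 0 := by rw [hrdef, h]; simp
    linarith
  have hx0 : x ≠ 0 := by
    intro h
    have hpos := Real.rpow_pos_of_pos hq (-((n+2:ℕ) : ℝ) - 1/2)
    rw [← hx, h] at hpos
    simp at hpos
  set s := r ^ ((1:ℝ)/2) with hsdef
  have hs0 : 0 < s := Real.rpow_pos_of_pos hq _
  have hs2 : s^2 = r := by
    rw [hsdef, ← Real.rpow_natCast (r ^ ((1:ℝ)/2)) 2, ← Real.rpow_mul hq.le]
    norm_num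
  have hs57 : s ≤ 0.57736 := by nlinarith [hs2, hq3, hs0, sq_nonneg (s - 0.57736)]
  have hs1 : s < 1 := by linarith
  have hs7lt : s^7 < 1 := pow_lt_one₀ hs0.le hs1 (by norm_num)
  have hs7inv : (0:ℝ) < (1 - s^7)⁻¹ := by
    apply inv_pos.mpr; linarith
  set C := r ^ (-(((n+2:ℕ)) : ℝ)^2/2) with hCdef
  have hC0 : 0 < C := Real.rpow_pos_of_pos hq _
  -- modulus formulas
  have habs_plus : ∀ m : ℕ, ‖t ((n+2)+m)‖ = C * s^(m^2) := by
    intro m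
    have := abs_term_dist q x (n+2) hq hx ((n+2)+m) m (by push_cast; ring)
    rw [← hrdef] at this
    exact this
  have habs_minus : ∀ m : ℕ, m ≤ n+2 → ‖t ((n+2)-m)‖ = C * s^(m^2) := by
    intro m hm
    have := abs_term_dist q x (n+2) hq hx ((n+2)-m) m
      (by rw [Nat.cast_sub hm]; push_cast; ring)
    rw [← hrdef] at this
    exact this
  -- geometric facts
  have hsum7 : Summable (fun i:ℕ => (s^7)^i) :=
    summable_geometric_of_lt_one (by positivity) hs7lt
  have htsum7 : ∑' i:ℕ, (s^7)^i = (1-s^7)⁻¹ := tsum_geometric_of_lt_one (by positivity) hs7lt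
  -- tail majorization
  have hmaj : ∀ i:ℕ, ‖t (i + (n+5))‖ ≤ (C*s^9) * (s^7)^i := by
    intro i
    have hidx : i + (n+5) = (n+2)+(3+i) := by omega
    rw [hidx, habs_plus (3+i)]
    have hii : i ≤ i^2 := Nat.le_self_pow (by norm_num) i
    have hsq : (3+i)^2 = 9+6*i+i^2 := by ring
    have hexp : 9 + 7*i ≤ (3+i)^2 := by omega
    calc C * s^((3+i)^2) ≤ C * s^(9+7*i) := by
          apply mul_le_mul_of_nonneg_left _ hC0.le
          exact pow_le_pow_of_le_one hs0.le hs1.le hexp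
      _ = (C*s^9)*(s^7)^i := by rw [pow_add, pow_mul]; ring
  have hsummaj : Summable (fun i:ℕ => (C*s^9)*(s^7)^i) := hsum7.mul_left _
  have habs_sum : Summable (fun i:ℕ => ‖t (i + (n+5))‖) :=
    Summable.of_nonneg_of_le (fun i => norm_nonneg _) hmaj hsummaj
  have hsumt_shift : Summable (fun i:ℕ => t (i + (n+5))) := by
    apply Summable.of_norm
    simpa using habs_sum
  have hsumt : Summable t := (summable_nat_add_iff (n+5)).mp hsumt_shift
  have hsplit := Summable.sum_add_tsum_nat_add (f := t) (n+5) hsumt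
  -- tail bound
  have hT2 : ‖∑' i, t (i + (n+5))‖ ≤ C*s^9*(1-s^7)⁻¹ := by
    have hnormsum : Summable (fun i:ℕ => ‖t (i + (n+5))‖) := by
      simpa using habs_sum
    have hnorm := norm_tsum_le_tsum_norm hnormsum
    calc ‖∑' i, t (i + (n+5))‖ ≤ ∑' i, ‖t (i + (n+5))‖ := hnorm
      _ = ∑' i, ‖t (i + (n+5))‖ := tsum_congr (fun i => rfl)
      _ ≤ ∑' i:ℕ, (C*s^9)*(s^7)^i := Summable.tsum_le_tsum hmaj habs_sum hsummaj
      _ = (C*s^9) * ∑' i:ℕ, (s^7)^i := tsum_mul_left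
      _ = C*s^9*(1-s^7)⁻¹ := by rw [htsum7]
  -- front bound
  have hfront : ∀ i ∈ Finset.range n, ‖t i‖ ≤ (C*s^9) * (s^7)^(n-1-i) := by
    intro i hi
    have hin : i < n := Finset.mem_range.mp hi
    obtain ⟨d, hd⟩ : ∃ d, n = i + d + 1 := ⟨n-i-1, by omega⟩
    have hidx : i = (n+2) - (d+3) := by omega
    have hd3 : d + 3 ≤ n + 2 := by omega
    have hrw : (s^7)^(n - 1 - i) = (s^7)^d := by rw [show n - 1 - i = d from by omega]
    rw [hrw, hidx, habs_minus (d+3) hd3]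
    have hii : d ≤ d^2 := Nat.le_self_pow (by norm_num) d
    have hsq : (d+3)^2 = 9+6*d+d^2 := by ring
    have hexp : 9 + 7*d ≤ (d+3)^2 := by omega
    calc C * s^((d+3)^2) ≤ C * s^(9+7*d) := by
          apply mul_le_mul_of_nonneg_left _ hC0.le
          exact pow_le_pow_of_le_one hs0.le hs1.le hexp
      _ = (C*s^9)*(s^7)^d := by rw [pow_add, pow_mul]; ring
  have hT1 : ‖∑ i ∈ Finset.range n, t i‖ ≤ C*s^9*(1-s^7)⁻¹ := by
    calc ‖∑ i ∈ Finset.range n, t i‖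
        ≤ ∑ i ∈ Finset.range n, ‖t i‖ := by
          have := norm_sum_le (Finset.range n) t
          exact this
      _ ≤ ∑ i ∈ Finset.range n, (C*s^9) * (s^7)^(n-1-i) := Finset.sum_le_sum hfront
      _ = (C*s^9) * ∑ i ∈ Finset.range n, (s^7)^(n-1-i) := by rw [Finset.mul_sum]
      _ = (C*s^9) * ∑ i ∈ Finset.range n, (s^7)^i := by
          rw [Finset.sum_range_reflect (fun i => (s^7)^i) n]
      _ ≤ (C*s^9) * (1-s^7)⁻¹ := by
          apply mul_le_mul_of_nonneg_left _ (by positivity)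
          rw [← htsum7]
          exact Summable.sum_le_tsum (Finset.range n) (fun i _ => by positivity) hsum7
      _ = C*s^9*(1-s^7)⁻¹ := by ring
  -- five-term factorization
  set a : ℂ := q^(n+3)*x with hadef
  set b : ℂ := (q^(n+2)*x)⁻¹ with hbdef
  have hfive := five_factor q x n hq0 hx0
  have habsk : ‖t (n+2)‖ = C := by
    have := habs_plus 0
    simpa using this
  have ha : ‖a‖ = s := by
    rw [hadef, norm_mul, norm_pow, hx, ← hrdef, ← Real.rpow_natCast r (n+3),
      ← Real.rpow_add hq, hsdef]
    congr 1
    push_cast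
    ring
  have hb : ‖b‖ = s := by
    rw [hbdef, norm_inv, norm_mul, norm_pow, hx, ← hrdef, ← Real.rpow_natCast r (n+2),
      ← Real.rpow_add hq]
    rw [show ((n+2:ℕ):ℝ) + (-((n+2:ℕ):ℝ) - 1/2) = -(1/2) from by ring]
    rw [Real.rpow_neg hq.le, inv_inv, hsdef]
  have hcore := core s hs0 hs57 a b ha hb
  -- conclude
  intro h0
  have hth : (∑' j, t j) = 0 := h0
  rw [← hsplit] at hth
  have hsplit5 : ∑ i ∈ Finset.range (n+5), t i
      = (∑ i ∈ Finset.range n, t i) + (t n + t (n+1) + t (n+2) + t (n+3) + t (n+4)) := by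
    rw [Finset.sum_range_succ, Finset.sum_range_succ, Finset.sum_range_succ,
      Finset.sum_range_succ, Finset.sum_range_succ]
    ring
  rw [hsplit5] at hth
  have hGval : t (n+2) * (1 + a + b + a*b*(a^2+b^2))
      = -(∑ i ∈ Finset.range n, t i) - ∑' i, t (i + (n+5)) := by
    rw [hadef, hbdef, ← hfive]
    simp only [htdef]
    linear_combination hth
  have hABS : ‖t (n+2) * (1 + a + b + a*b*(a^2+b^2))‖
      ≤ 2*(C*s^9*(1-s^7)⁻¹) := by
    rw [hGval]
    calc ‖-(∑ i ∈ Finset.range n, t i) - ∑' i, t (i + (n+5))‖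
        ≤ ‖-(∑ i ∈ Finset.range n, t i)‖ + ‖∑' i, t (i + (n+5))‖ := by
          simpa [sub_eq_add_neg] using norm_add_le (-(∑ i ∈ Finset.range n, t i)) (-(∑' i, t (i + (n+5))))
      _ = ‖∑ i ∈ Finset.range n, t i‖ + ‖∑' i, t (i + (n+5))‖ := by
          rw [norm_neg]
      _ ≤ 2*(C*s^9*(1-s^7)⁻¹) := by linarith
  rw [norm_mul, habsk] at hABS
  have hgt : C * (2*s^9/(1-s^7)) < C * ‖1 + a + b + a*b*(a^2+b^2)‖ :=
    mul_lt_mul_of_pos_left hcore hC0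
  rw [div_eq_mul_inv] at hgt
  nlinarith [hgt, hABS, hC0]


/-- For 0 < |q| ≤ 1/3, k ≥ 2 and |x| = |q|^{-k-1/2}, one has θ(q,x) ≠ 0. -/
theorem theta_ne_zero_on_circles (q x : ℂ) (k : ℕ) (hk : 2 ≤ k)
    (hq : 0 < ‖q‖) (hq3 : ‖q‖ ≤ 1 / 3)
    (hx : ‖x‖ = ‖q‖ ^ (-(k : ℝ) - 1 / 2)) :
    theta q x ≠ 0 :=
  theta_ne_zero_on_circles' q x k hk hq hq3 hx
end
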